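/- Let u, v ≥ 2 be integers with uv ≠ 4 and M = [[a,b],[c,d]] ∈ 𝒢_{u,v}. Then M belongs to the group generated by L_u and R_v if and only if (f_{u,v} ∘ C)(b/d) satisfies the (u,v)-divisibility property (v divides entries in even positions, u divides entries in odd positions). -/

import Mathlib

abbrev SL2 := Matrix.SpecialLinearGroup (Fin 2) ℤ

/-- `L_u = [[1,0],[u,1]]`. -/
def Lmat (u : ℤ) : SL2 :=
  ⟨!![1, 0; u, 1], by simp [Matrix.det_fin_two_of]⟩

/-- `R_v = [[1,v],[0,1]]`. -/
def Rmat (v : ℤ) : SL2 :=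
  ⟨!![1, v; 0, 1], by simp [Matrix.det_fin_two_of]⟩

/-- The set `𝒢_{u,v}`. -/
def Gscr (u v : ℤ) : Set SL2 :=
  {M | ∃ n1 n2 n3 n4 : ℤ,
    (M : Matrix (Fin 2) (Fin 2) ℤ) = !![1 + u*v*n1, v*n2; u*n3, 1 + u*v*n4]}

/-- The group `G_{u,v}` generated by `L_u` and `R_v`. -/
def Guv (u v : ℤ) : Subgroup SL2 := Subgroup.closure {Lmat u, Rmat v}

/-- Alternating product `R^{a₀} L^{a₁} R^{a₂} ⋯` from a list of exponents
(the boolean records whether the next factor is a power of `R`). -/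
def altProd (u v : ℤ) : Bool → List ℤ → SL2
  | _, [] => 1
  | true, a :: l => (Rmat v) ^ a * altProd u v false l
  | false, a :: l => (Lmat u) ^ a * altProd u v true l


/-- Evaluation of a finite continued fraction `[q₀, q₁, …, q_r]`. -/
def E : List ℤ → ℚ
  | [] => 0
  | [q] => (q : ℚ)
  | q :: l => (q : ℚ) + 1 / E l

/-- Concatenation `⊕` of finite sequences, merging when the second begins with `0`. -/
def oplus (a b : List ℤ) : List ℤ :=
  match b with
  | [] => a
  | p :: ps =>
    if p = 0 then
      match ps with
      | [] => a
      | p1 :: ps' => a.dropLast ++ (a.getLast! + p1) :: ps'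
    else a ++ (p :: ps)

/-- No tail continued fraction `[q_i, …, q_r]` (for `0 < i < r`) evaluates to `0`. -/
def TailsNonzero (l : List ℤ) : Prop :=
  ∀ i, 0 < i → i + 1 < l.length → E (l.drop i) ≠ 0

/-- `[q₀, …, q_r]` is a short continued fraction: `q_i ≥ 1` for `0 < i < r`, `q_r > 1` if `r > 0`. -/
def IsShortCF (l : List ℤ) : Prop :=
  l ≠ [] ∧ (∀ i, 0 < i → i + 1 < l.length → 1 ≤ l.getD i 0) ∧
    (1 < l.length → 1 < l.getD (l.length - 1) 0)

/-- Membership in `A₁`. -/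
def memA1 (l : List ℤ) : Prop := IsShortCF l ∧ TailsNonzero l

/-- Membership in `A₂`: all entries after the first have absolute value `> 1`. -/
def memA2 (l : List ℤ) : Prop :=
  l ≠ [] ∧ (∀ i, 0 < i → i < l.length → 1 < |l.getD i 0|) ∧ TailsNonzero l

/-- The `(u,v)`-divisibility property: `v` divides even-indexed entries, `u` odd-indexed ones. -/
def DivProp (u v : ℤ) (l : List ℤ) : Prop :=
  ∀ i, i < l.length → (if i % 2 = 0 then v else u) ∣ l.getD i 0

/-- The function `f_{u,v} : A₁ → A₂`. -/
def fCF (u v : ℤ) : List ℤ → List ℤ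
  | [] => []
  | [q0] => [q0]
  | q0 :: q1 :: rest =>
    if ¬ (v ∣ q0) ∧ q1 = 1 then
      match rest with
      | [] => [q0 + 1]
      | q2 :: rest' => oplus [q0 + 1] ((fCF v u ((q2 + 1) :: rest')).map (fun x => -x))
    else if ¬ (v ∣ q0) ∧ q1 = 2 then
      match rest with
      | [] => [q0 + 1, -2]
      | q2 :: rest' => oplus [q0 + 1] (fCF v u (-2 :: (q2 + 1) :: rest'))
    else oplus [q0] (fCF v u (q1 :: rest))
termination_by l => l.length
decreasing_by all_goals (simp_all [List.length]; try omega)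

/-- The function `g_{u,v} : A₂ → A₁`. -/
def gCF (u v : ℤ) : List ℤ → List ℤ
  | [] => []
  | [q0] => [q0]
  | q0 :: q1 :: rest =>
    if (q1 < 0 ∧ u ≠ 2) ∨ (q1 < -2 ∧ u = 2) then
      oplus [q0 - 1, 1] ((gCF v u (((q1 + 1) :: rest).map (fun x => -x))))
    else if q1 = -2 ∧ u = 2 then
      match rest with
      | [] => [q0 - 1, 2]
      | q2 :: rest' => oplus [q0 - 1, 2] (gCF v u ((q2 - 1) :: rest'))
    else oplus [q0] (gCF v u (q1 :: rest))
termination_by l => l.length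
decreasing_by all_goals (simp_all [List.length]; try omega)

/-! ### Section 1: basics about `E`, `oplus`, entry bounds, short CFs -/

lemma E_nil : E [] = 0 := rfl

lemma E_single (a : ℤ) : E [a] = (a : ℚ) := rfl

lemma E_cons (a : ℤ) (l : List ℤ) : E (a :: l) = (a : ℚ) + 1 / E l := by
  cases l with
  | nil => simp [E]
  | cons b m => rfl

lemma E_neg (l : List ℤ) : E (l.map (fun x => -x)) = - E l := by
  induction l with
  | nil => simp [E]
  | cons a m ih =>
    rw [List.map_cons, E_cons, E_cons, ih]
    push_cast
    rw [div_neg]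
    ring

lemma oplus_single_cons (x p : ℤ) (ps : List ℤ) (hp : p ≠ 0) :
    oplus [x] (p :: ps) = x :: p :: ps := by
  simp [oplus, hp]

lemma E_oplus_single (x : ℤ) (b : List ℤ) : E (oplus [x] b) = (x : ℚ) + 1 / E b := by
  match b with
  | [] => simp [oplus, E_single, E_nil]
  | p :: ps =>
    by_cases hp : p = 0
    · subst hp
      match ps with
      | [] =>
        have h : oplus [x] [0] = [x] := by simp [oplus]
        rw [h, E_single, E_cons]
        norm_num [E_nil]
      | p1 :: ps' =>
        have h : oplus [x] ((0:ℤ) :: p1 :: ps') = (x + p1) :: ps' := by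
          simp [oplus, List.getLast!]
        rw [h, E_cons (x+p1), E_cons 0, E_cons p1]
        push_cast
        rw [zero_add, one_div_one_div]
        ring
    · rw [oplus_single_cons x p ps hp, E_cons x]

/-- All entries have absolute value at least 2. -/
def Ents2 (l : List ℤ) : Prop := ∀ i, i < l.length → 2 ≤ |l.getD i 0|

lemma ents2_cons {a : ℤ} {l : List ℤ} : Ents2 (a :: l) ↔ 2 ≤ |a| ∧ Ents2 l := by
  constructor
  · intro h
    refine ⟨h 0 (by simp), fun i hi => ?_⟩
    have := h (i + 1) (by simpa using Nat.succ_lt_succ hi)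
    simpa using this
  · rintro ⟨ha, h⟩ i hi
    cases i with
    | zero => simpa using ha
    | succ j => exact (by simpa using h j (by simpa using Nat.lt_of_succ_lt_succ hi))

lemma ents2_nil : Ents2 [] := fun i hi => by simp at hi

/-- value bound: entries ≥ 2 in abs force |E| > max(1, |head|-1). -/
lemma EB1 : ∀ (l : List ℤ), Ents2 l → l ≠ [] →
    1 < |E l| ∧ (|l.getD 0 0| : ℚ) - 1 < |E l| := by
  intro l
  induction l with
  | nil => intro _ h; exact absurd rfl h
  | cons a m ih =>
    intro h _
    obtain ⟨ha, hm⟩ := ents2_cons.mp h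
    have ha' : (2 : ℚ) ≤ |(a : ℚ)| := by exact_mod_cast (by simpa using ha)
    rcases eq_or_ne m [] with rfl | hm0
    · rw [E_single]
      constructor
      · linarith
      · simp
    · obtain ⟨h1, _⟩ := ih hm hm0
      have hEm : E m ≠ 0 := by
        intro h0; rw [h0] at h1; norm_num at h1
      have hinv : |1 / E m| < 1 := by
        rw [abs_div, abs_one, div_lt_one (by positivity)]
        exact h1
      rw [E_cons]
      have habs : |(a : ℚ)| - |1 / E m| ≤ |(a : ℚ) + 1 / E m| := by
        have := abs_sub_abs_le_abs_sub (a : ℚ) (-(1 / E m))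
        simp only [abs_neg, sub_neg_eq_add] at this
        linarith
      constructor
      · linarith
      · simp only [List.getD_cons_zero]
        linarith

lemma EB1' (l : List ℤ) (h : Ents2 l) (hne : l ≠ []) : E l ≠ 0 := by
  intro h0
  have := (EB1 l h hne).1
  rw [h0] at this; norm_num at this

/-- Hypotheses describing tails of short continued fractions. -/
def TailPos (l : List ℤ) : Prop :=
  (∀ i, i < l.length - 1 → 1 ≤ l.getD i 0) ∧ (l ≠ [] → 2 ≤ l.getD (l.length - 1) 0)

lemma SCF1 : ∀ (l : List ℤ), TailPos l → l ≠ [] → 1 < E l := by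
  intro l
  induction l with
  | nil => intro _ h; exact absurd rfl h
  | cons a m ih =>
    intro h _
    rcases eq_or_ne m [] with rfl | hm0
    · have := h.2 (by simp)
      simp only [List.length_cons, List.length_nil, Nat.zero_add, Nat.sub_self,
        List.getD_cons_zero] at this
      rw [E_single]
      exact_mod_cast (by omega : 1 < a)
    · have hmlen : 1 ≤ m.length := List.length_pos_iff.mpr hm0
      have hm : TailPos m := by
        constructor
        · intro i hi
          have := h.1 (i + 1) (by simp; omega)
          simpa using this
        · intro _
          have := h.2 (by simp)
          have hl : (a :: m).length - 1 = (m.length - 1) + 1 := by simp; omega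
          rw [hl, List.getD_cons_succ] at this
          exact this
      have h1 : 1 < E m := ih hm hm0
      have ha : (1 : ℚ) ≤ (a : ℚ) := by
        have := h.1 0 (by simp; omega)
        exact_mod_cast (by simpa using this)
      rw [E_cons]
      have : 0 < 1 / E m := by positivity
      have : 1 / E m < 1 := by
        rw [div_lt_one (by linarith)]; linarith
      linarith

lemma SCF1' (l : List ℤ) (h : TailPos l) (hne : l ≠ []) : E l ≠ 0 :=
  fun h0 => by have := SCF1 l h hne; rw [h0] at this; norm_num at this

lemma shortCF_cons_iff {a : ℤ} {l : List ℤ} (hl : l ≠ []) :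
    IsShortCF (a :: l) ↔ TailPos l := by
  have hlen : 1 ≤ l.length := List.length_pos_iff.mpr hl
  constructor
  · rintro ⟨-, h1, h2⟩
    constructor
    · intro i hi
      have := h1 (i + 1) (by omega) (by simp; omega)
      simpa using this
    · intro _
      have := h2 (by simp; omega)
      have hl2 : (a :: l).length - 1 = (l.length - 1) + 1 := by simp; omega
      rw [hl2, List.getD_cons_succ] at this
      omega
  · rintro ⟨h1, h2⟩
    refine ⟨by simp, fun i hi0 hi => ?_, fun _ => ?_⟩
    · obtain ⟨j, rfl⟩ : ∃ j, i = j + 1 := ⟨i - 1, by omega⟩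
      rw [List.getD_cons_succ]
      rcases lt_or_ge j (l.length - 1) with hj | hj
      · exact h1 j hj
      · have hj' : j = l.length - 1 := by simp at hi; omega
        subst hj'
        have := h2 hl
        omega
    · have hl2 : (a :: l).length - 1 = (l.length - 1) + 1 := by simp; omega
      rw [hl2, List.getD_cons_succ]
      have := h2 hl
      omega

lemma short_tail_short {a : ℤ} {l : List ℤ} (h : IsShortCF (a :: l)) (hl : l ≠ []) :
    IsShortCF l := by
  have htp := (shortCF_cons_iff hl).mp h
  rcases l with _ | ⟨b, m⟩
  · exact absurd rfl hl
  rcases eq_or_ne m [] with rfl | hm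
  · exact ⟨by simp, fun i hi0 hi => by
      simp only [List.length_cons, List.length_nil] at hi; omega, fun h1 => by
      simp only [List.length_cons, List.length_nil] at h1; omega⟩
  · rw [shortCF_cons_iff hm]
    constructor
    · intro i hi
      have := htp.1 (i + 1) (by simp at hi ⊢; omega)
      simpa using this
    · intro _
      have := htp.2 (by simp)
      have hlen : 1 ≤ m.length := List.length_pos_iff.mpr hm
      have hl2 : (b :: m).length - 1 = (m.length - 1) + 1 := by simp; omega
      rw [hl2, List.getD_cons_succ] at this
      exact this

lemma short_E_int {l : List ℤ} (h : IsShortCF l) {n : ℤ} (hE : E l = (n : ℚ)) : l = [n] := by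
  rcases l with _ | ⟨a, m⟩
  · exact absurd rfl h.1
  rcases eq_or_ne m [] with rfl | hm
  · rw [E_single] at hE
    have : a = n := by exact_mod_cast hE
    rw [this]
  · exfalso
    have htp := (shortCF_cons_iff hm).mp h
    have h1 : 1 < E m := SCF1 m htp hm
    rw [E_cons] at hE
    have h2 : 0 < 1 / E m := by positivity
    have h3 : 1 / E m < 1 := by rw [div_lt_one (by linarith)]; linarith
    have : (a : ℚ) < n := by linarith
    have : (n : ℚ) < a + 1 := by linarith
    have ha1 : a < n := by exact_mod_cast ‹(a:ℚ) < n›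
    have ha2 : (n:ℤ) < a + 1 := by exact_mod_cast (by push_cast; linarith : (n:ℚ) < (a:ℚ) + 1)
    omega

/-- Uniqueness of short continued fraction expansions. -/
lemma short_unique : ∀ (n : ℕ) (l m : List ℤ), l.length ≤ n → IsShortCF l → IsShortCF m →
    E l = E m → l = m := by
  intro n
  induction n with
  | zero => intro l m hl h _ _; exact absurd (List.length_eq_zero_iff.mp (by omega)) h.1
  | succ n ih =>
    intro l m hlen hl hm hE
    rcases l with _ | ⟨a, l'⟩
    · exact absurd rfl hl.1
    rcases eq_or_ne l' [] with rfl | hl'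
    · exact (short_E_int hm (hE ▸ E_single a) ).symm
    rcases m with _ | ⟨b, m'⟩
    · exact absurd rfl hm.1
    rcases eq_or_ne m' [] with rfl | hm'
    · exact short_E_int hl (by rw [hE, E_single])
    · have htl := (shortCF_cons_iff hl').mp hl
      have htm := (shortCF_cons_iff hm').mp hm
      have h1l : 1 < E l' := SCF1 l' htl hl'
      have h1m : 1 < E m' := SCF1 m' htm hm'
      have hil : 0 < 1 / E l' ∧ 1 / E l' < 1 :=
        ⟨by positivity, by rw [div_lt_one (by linarith)]; linarith⟩
      have him : 0 < 1 / E m' ∧ 1 / E m' < 1 :=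
        ⟨by positivity, by rw [div_lt_one (by linarith)]; linarith⟩
      rw [E_cons, E_cons] at hE
      have hab : a = b := by
        have h1 : (a : ℚ) - b < 1 := by linarith
        have h2 : (b : ℚ) - a < 1 := by linarith
        have h1' : a - b < 1 := by exact_mod_cast (by push_cast; linarith : ((a - b : ℤ) : ℚ) < 1)
        have h2' : b - a < 1 := by exact_mod_cast (by push_cast; linarith : ((b - a : ℤ) : ℚ) < 1)
        omega
      subst hab
      have : 1 / E l' = 1 / E m' := by linarith
      have hE' : E l' = E m' := by
        have hl0 : E l' ≠ 0 := by linarith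
        have hm0 : E m' ≠ 0 := by linarith
        field_simp at this
        linarith
      have := ih l' m' (by simp at hlen; omega) (short_tail_short hl hl')
        (short_tail_short hm hm') hE'
      rw [this]

/-! ### Section 2: unfolding lemmas for `fCF` -/

lemma fCF_single (u v q0 : ℤ) : fCF u v [q0] = [q0] := by simp [fCF]

lemma fCF_b1nil (u v q0 : ℤ) (h : ¬ v ∣ q0) : fCF u v [q0, 1] = [q0 + 1] := by
  simp [fCF, h]

lemma fCF_b1 (u v q0 q2 : ℤ) (rest' : List ℤ) (h : ¬ v ∣ q0) :
    fCF u v (q0 :: 1 :: q2 :: rest') =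
      oplus [q0 + 1] ((fCF v u ((q2 + 1) :: rest')).map (fun x => -x)) := by
  rw [fCF.eq_def]
  simp [h]

lemma fCF_b2nil (u v q0 : ℤ) (h : ¬ v ∣ q0) : fCF u v [q0, 2] = [q0 + 1, -2] := by
  rw [fCF.eq_def]
  simp [h]

lemma fCF_b2 (u v q0 q2 : ℤ) (rest' : List ℤ) (h : ¬ v ∣ q0) :
    fCF u v (q0 :: 2 :: q2 :: rest') =
      oplus [q0 + 1] (fCF v u (-2 :: (q2 + 1) :: rest')) := by
  rw [fCF.eq_def]
  simp [h]

lemma fCF_else (u v q0 q1 : ℤ) (rest : List ℤ) (h : v ∣ q0 ∨ (q1 ≠ 1 ∧ q1 ≠ 2)) :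
    fCF u v (q0 :: q1 :: rest) = oplus [q0] (fCF v u (q1 :: rest)) := by
  rw [fCF.eq_def]
  rcases h with h | ⟨h1, h2⟩
  · simp [h]
  · simp [h1, h2]

/-! ### Section 3: `fCF` preserves the value and produces big-tailed sequences -/

lemma short_singleton (a : ℤ) : IsShortCF [a] :=
  ⟨by simp, fun i hi0 hi => absurd hi (by simp), fun h => by simp at h⟩

lemma short_head_swap {a : ℤ} {m : List ℤ} (b : ℤ) (h : IsShortCF (a :: m)) :
    IsShortCF (b :: m) := by
  rcases eq_or_ne m [] with rfl | hm
  · exact short_singleton b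
  · exact (shortCF_cons_iff hm).mpr ((shortCF_cons_iff hm).mp h)

lemma tailpos_tail {a : ℤ} {m : List ℤ} (h : TailPos (a :: m)) (hm : m ≠ []) : TailPos m := by
  have hmlen : 1 ≤ m.length := List.length_pos_iff.mpr hm
  constructor
  · intro i hi
    have := h.1 (i + 1) (by simp; omega)
    simpa using this
  · intro _
    have := h.2 (by simp)
    have hl : (a :: m).length - 1 = (m.length - 1) + 1 := by simp; omega
    rw [hl, List.getD_cons_succ] at this
    exact this

lemma tailpos_head {m : List ℤ} (h : TailPos m) (hm : m ≠ []) : 1 ≤ m.getD 0 0 := by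
  rcases m with _ | ⟨a, m'⟩
  · exact absurd rfl hm
  rcases eq_or_ne m' [] with rfl | hm'
  · have h2 := h.2 (by simp)
    simp at h2
    simpa using (by omega : 1 ≤ a)
  · have := h.1 0 (by simp [List.length_pos_iff.mpr hm'])
    simpa using this

lemma tailpos_cons {m : List ℤ} (b : ℤ) (hb : 1 ≤ b) (hb2 : m = [] → 2 ≤ b)
    (h : TailPos m) : TailPos (b :: m) := by
  rcases eq_or_ne m [] with rfl | hm
  · exact ⟨fun i hi => by simp at hi, fun _ => by simpa using hb2 rfl⟩
  · have hmlen : 1 ≤ m.length := List.length_pos_iff.mpr hm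
    constructor
    · intro i hi
      simp only [List.length_cons] at hi
      cases i with
      | zero => simpa using hb
      | succ j =>
        rw [List.getD_cons_succ]
        exact h.1 j (by omega)
    · intro _
      have hl : (b :: m).length - 1 = (m.length - 1) + 1 := by simp; omega
      rw [hl, List.getD_cons_succ]
      exact h.2 hm

lemma short_head_lb {c : ℤ} {m : List ℤ} (h : IsShortCF (c :: m)) :
    (c : ℚ) ≤ E (c :: m) ∧ E (c :: m) < (c : ℚ) + 1 := by
  rcases eq_or_ne m [] with rfl | hm
  · rw [E_single]; constructor <;> norm_num
  · have h1 : 1 < E m := SCF1 m ((shortCF_cons_iff hm).mp h) hm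
    rw [E_cons]
    have h2 : 0 < 1 / E m := by positivity
    have h3 : 1 / E m < 1 := by rw [div_lt_one (by linarith)]; linarith
    constructor <;> linarith

lemma tails_cons (c : ℤ) (w : List ℤ) (h0 : 1 < |E w|)
    (h : ∀ j, 0 < j → j < w.length → 1 < |E (w.drop j)|) :
    ∀ i, 0 < i → i < (c :: w).length → 1 < |E ((c :: w).drop i)| := by
  intro i hi hlen
  obtain ⟨j, rfl⟩ : ∃ j, i = j + 1 := ⟨i - 1, by omega⟩
  rw [List.drop_succ_cons]
  rcases Nat.eq_zero_or_pos j with rfl | hj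
  · simpa using h0
  · exact h j hj (by simp at hlen; omega)

lemma tails_neg (w : List ℤ) (h : ∀ j, 0 < j → j < w.length → 1 < |E (w.drop j)|) :
    ∀ j, 0 < j → j < (w.map (fun x => -x)).length → 1 < |E ((w.map (fun x => -x)).drop j)| := by
  intro j hj hlen
  rw [List.length_map] at hlen
  rw [← List.map_drop, E_neg, abs_neg]
  exact h j hj hlen

/-- Main structural lemma for `fCF` on short continued fractions. -/
lemma fCF_main : ∀ (n : ℕ) (u v : ℤ) (l : List ℤ), l.length ≤ n → IsShortCF l →
    (∃ c t, fCF u v l = c :: t ∧ (c = l.getD 0 0 ∨ c = l.getD 0 0 + 1)) ∧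
    E (fCF u v l) = E l ∧
    ∀ i, 0 < i → i < (fCF u v l).length → 1 < |E ((fCF u v l).drop i)| := by
  intro n
  induction n with
  | zero =>
    intro u v l hlen hshort
    exact absurd (List.length_eq_zero_iff.mp (by omega)) hshort.1
  | succ n ih =>
    intro u v l hlen hshort
    rcases l with _ | ⟨q0, l1⟩
    · exact absurd rfl hshort.1
    rcases l1 with _ | ⟨q1, rest⟩
    · rw [fCF_single]
      exact ⟨⟨q0, [], rfl, Or.inl (by simp)⟩, rfl, fun i hi hl => by simp at hl; omega⟩
    have htp1 : TailPos (q1 :: rest) := (shortCF_cons_iff (by simp)).mp hshort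
    have hq1 : 1 ≤ q1 := by simpa using tailpos_head htp1 (by simp)
    have hy1 : 1 < E (q1 :: rest) := SCF1 _ htp1 (by simp)
    by_cases hv : v ∣ q0
    case pos =>
      -- else branch (since v ∣ q0)
      rw [fCF_else u v q0 q1 rest (Or.inl hv)]
      have hsub : IsShortCF (q1 :: rest) := short_tail_short hshort (by simp)
      obtain ⟨⟨c, t, hct, hco⟩, hE, htails⟩ :=
        ih v u (q1 :: rest) (by simp at hlen ⊢; omega) hsub
      have hc : c ≠ 0 := by simp only [List.getD_cons_zero] at hco; omega
      rw [hct, oplus_single_cons q0 c t hc, ← hct]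
      have hEw : 1 < |E (fCF v u (q1 :: rest))| := by
        rw [hE]; rw [abs_of_pos (by linarith)]; exact hy1
      refine ⟨⟨q0, _, rfl, Or.inl (by simp)⟩, ?_, ?_⟩
      · rw [E_cons q0 (fCF v u (q1 :: rest)), hE, E_cons q0 (q1 :: rest)]
      · exact tails_cons q0 _ hEw htails
    case neg =>
      by_cases h1 : q1 = 1
      case pos =>
        subst h1
        rcases rest with _ | ⟨q2, rest'⟩
        · -- [q0, 1] is not a short CF
          exfalso
          have := hshort.2.2 (by simp)
          simp at this
        · -- branch 1
          have hq2 : 1 ≤ q2 := by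
            simpa using tailpos_head (tailpos_tail htp1 (by simp)) (by simp)
          have htp2 : TailPos (q2 :: rest') := tailpos_tail htp1 (by simp)
          have hsub : IsShortCF ((q2 + 1) :: rest') :=
            short_head_swap (q2 + 1) (short_tail_short (short_tail_short hshort (by simp)) (by simp))
          obtain ⟨⟨c, t, hct, hco⟩, hE, htails⟩ :=
            ih v u ((q2 + 1) :: rest') (by simp at hlen ⊢; omega) hsub
          have hc2 : 2 ≤ c := by simp only [List.getD_cons_zero] at hco; omega
          set y₂ := E (q2 :: rest') with hy₂def
          have hy₂ : 1 < y₂ := SCF1 _ htp2 (by simp)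
          have hEsub : E (fCF v u ((q2 + 1) :: rest')) = y₂ + 1 := by
            rw [hE, hy₂def, E_cons, E_cons]; push_cast; ring
          rw [fCF_b1 u v q0 q2 rest' hv]
          have hnegct : (fCF v u ((q2 + 1) :: rest')).map (fun x => -x) = (-c) :: t.map (fun x => -x) := by
            rw [hct]; simp
          have hnc : (-c) ≠ 0 := by omega
          rw [hnegct, oplus_single_cons _ _ _ hnc, ← hnegct]
          refine ⟨⟨q0 + 1, _, rfl, Or.inr (by simp)⟩, ?_, ?_⟩
          · rw [E_cons (q0+1), E_neg, hEsub, E_cons q0, E_cons 1, ← hy₂def, div_neg]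
            have h0 : y₂ ≠ 0 := by linarith
            have h0' : y₂ + 1 ≠ 0 := by linarith
            have h0'' : (1 : ℚ) + 1 / y₂ ≠ 0 := by
              have : 0 < 1 / y₂ := by positivity
              linarith
            have hm1 : (-1 : ℚ) - y₂ ≠ 0 := by linarith
            have hm2 : -(y₂ + 1) ≠ 0 := by linarith
            push_cast
            field_simp
            ring
          · refine tails_cons _ _ ?_ (tails_neg _ htails)
            rw [E_neg, abs_neg, hEsub, abs_of_pos (by linarith)]
            linarith
      case neg =>
        by_cases h2 : q1 = 2
        case pos =>
          subst h2
          rcases rest with _ | ⟨q2, rest'⟩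
          · -- l = [q0, 2]
            rw [fCF_b2nil u v q0 hv]
            refine ⟨⟨q0 + 1, _, rfl, Or.inr (by simp)⟩, ?_, ?_⟩
            · rw [E_cons (q0+1), E_cons q0, E_single, E_single]
              push_cast; ring_nf
            · intro i hi hl
              simp only [List.length_cons, List.length_nil] at hl
              interval_cases i
              · simp [E_single]
          · -- branch 2
            have hq2 : 1 ≤ q2 := by
              simpa using tailpos_head (tailpos_tail htp1 (by simp)) (by simp)
            have htp2 : TailPos (q2 :: rest') := tailpos_tail htp1 (by simp)
            set y₂ := E (q2 :: rest') with hy₂def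
            have hy₂ : 1 < y₂ := SCF1 _ htp2 (by simp)
            have hsub : IsShortCF (-2 :: (q2 + 1) :: rest') := by
              rw [shortCF_cons_iff (by simp)]
              exact tailpos_cons (q2 + 1) (by omega) (fun h => by omega)
                (by rcases eq_or_ne rest' [] with rfl | hr
                    · exact ⟨fun i hi => by simp at hi, fun h => by simp at h⟩
                    · exact tailpos_tail htp2 hr)
            obtain ⟨⟨c, t, hct, hco⟩, hE, htails⟩ :=
              ih v u (-2 :: (q2 + 1) :: rest') (by simp at hlen ⊢; omega) hsub
            have hc2 : c ≠ 0 := by simp only [List.getD_cons_zero] at hco; omega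
            have hE2 : E ((q2 + 1) :: rest') = y₂ + 1 := by
              rw [hy₂def, E_cons, E_cons]; push_cast; ring
            have hEsub : E (fCF v u (-2 :: (q2 + 1) :: rest')) = -2 + 1 / (y₂ + 1) := by
              rw [hE, E_cons, hE2]; push_cast; ring
            rw [fCF_b2 u v q0 q2 rest' hv]
            rw [hct, oplus_single_cons _ _ _ hc2, ← hct]
            have h0 : y₂ ≠ 0 := by linarith
            have h0' : y₂ + 1 ≠ 0 := by linarith
            have hpos : 0 < 1 / (y₂ + 1) := by positivity
            have hlt : 1 / (y₂ + 1) < 1 := by rw [div_lt_one (by linarith)]; linarith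
            refine ⟨⟨q0 + 1, _, rfl, Or.inr (by simp)⟩, ?_, ?_⟩
            · rw [E_cons (q0+1), hEsub, E_cons q0, E_cons 2, ← hy₂def]
              have h3 : (2:ℚ) * y₂ + 1 ≠ 0 := by linarith
              have h4 : (2 : ℚ) + 1 / y₂ ≠ 0 := by
                have : 0 < 1 / y₂ := by positivity
                linarith
              have e : (-2:ℚ) + 1/(y₂+1) = -((2*y₂+1)/(y₂+1)) := by field_simp; ring
              rw [e, div_neg]
              push_cast
              field_simp
              ring
            · refine tails_cons _ _ ?_ htails
              rw [hEsub, abs_of_neg (by linarith)]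
              linarith
        case neg =>
          rw [fCF_else u v q0 q1 rest (Or.inr ⟨h1, h2⟩)]
          have hsub : IsShortCF (q1 :: rest) := short_tail_short hshort (by simp)
          obtain ⟨⟨c, t, hct, hco⟩, hE, htails⟩ :=
            ih v u (q1 :: rest) (by simp at hlen ⊢; omega) hsub
          have hc : c ≠ 0 := by simp only [List.getD_cons_zero] at hco; omega
          rw [hct, oplus_single_cons q0 c t hc, ← hct]
          have hEw : 1 < |E (fCF v u (q1 :: rest))| := by
            rw [hE]; rw [abs_of_pos (by linarith)]; exact hy1
          refine ⟨⟨q0, _, rfl, Or.inl (by simp)⟩, ?_, ?_⟩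
          · rw [E_cons q0 (fCF v u (q1 :: rest)), hE, E_cons q0 (q1 :: rest)]
          · exact tails_cons q0 _ hEw htails

/-! ### Section 4: good sequences and helper lemmas -/

def Good (u v : ℤ) (s : List ℤ) : Prop :=
  s ≠ [] ∧ DivProp u v s ∧ ∀ i, 0 < i → i < s.length → s.getD i 0 ≠ 0

lemma divProp_cons {u v a : ℤ} {l : List ℤ} :
    DivProp u v (a :: l) ↔ v ∣ a ∧ DivProp v u l := by
  constructor
  · intro h
    refine ⟨by simpa using h 0 (by simp), fun i hi => ?_⟩
    have h2 := h (i + 1) (by simpa using Nat.succ_lt_succ hi)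
    rw [List.getD_cons_succ] at h2
    rcases Nat.mod_two_eq_zero_or_one i with h0 | h0
    · have : (i + 1) % 2 = 1 := by omega
      rw [this] at h2; rw [h0]; simpa using h2
    · have : (i + 1) % 2 = 0 := by omega
      rw [this] at h2; rw [h0]; simpa using h2
  · rintro ⟨ha, h⟩ i hi
    cases i with
    | zero => simpa using ha
    | succ j =>
      have h2 := h j (by simpa using Nat.lt_of_succ_lt_succ hi)
      rw [List.getD_cons_succ]
      rcases Nat.mod_two_eq_zero_or_one j with h0 | h0
      · have : (j + 1) % 2 = 1 := by omega
        rw [this]; rw [h0] at h2; simpa using h2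
      · have : (j + 1) % 2 = 0 := by omega
        rw [this]; rw [h0] at h2; simpa using h2

lemma good_tail {u v a : ℤ} {l : List ℤ} (h : Good u v (a :: l)) (hl : l ≠ []) :
    Good v u l := by
  refine ⟨hl, (divProp_cons.mp h.2.1).2, fun i hi hlen => ?_⟩
  have := h.2.2 (i + 1) (by omega) (by simp; omega)
  simpa using this

lemma good_ents2_tail {u v a : ℤ} {l : List ℤ} (hu : 2 ≤ u) (hv : 2 ≤ v)
    (h : Good u v (a :: l)) : Ents2 l := by
  intro i hi
  have hdvd := h.2.1 (i + 1) (by simp; omega)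
  rw [List.getD_cons_succ] at hdvd
  have hne := h.2.2 (i + 1) (by omega) (by simp; omega)
  rw [List.getD_cons_succ] at hne
  have hpos : 0 < |l.getD i 0| := abs_pos.mpr hne
  split_ifs at hdvd with hsp
  · have := Int.le_of_dvd hpos ((dvd_abs _ _).mpr hdvd); omega
  · have := Int.le_of_dvd hpos ((dvd_abs _ _).mpr hdvd); omega

lemma getD_neg : ∀ (s : List ℤ) (i : ℕ), i < s.length →
    (s.map (fun x => -x)).getD i 0 = -(s.getD i 0) := by
  intro s
  induction s with
  | nil => intro i hi; simp at hi
  | cons a l ih =>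
    intro i hi
    cases i with
    | zero => simp
    | succ j => simpa using ih j (by simpa using Nat.lt_of_succ_lt_succ hi)

lemma good_neg {u v : ℤ} {s : List ℤ} (h : Good u v s) : Good u v (s.map (fun x => -x)) := by
  refine ⟨by simpa using h.1, fun i hi => ?_, fun i hi hlen => ?_⟩
  · rw [List.length_map] at hi
    rw [getD_neg s i hi, dvd_neg]
    exact h.2.1 i hi
  · rw [List.length_map] at hlen
    rw [getD_neg s i hlen, neg_ne_zero]
    exact h.2.2 i hi hlen

lemma tailpos_nil : TailPos [] := ⟨fun i hi => by simp at hi, fun h => absurd rfl h⟩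

lemma not_dvd_sub_one {v a : ℤ} (hv : 2 ≤ v) (h : v ∣ a) : ¬ v ∣ (a - 1) := by
  intro h'
  have h1 : v ∣ 1 := by
    have := dvd_sub h h'
    simpa using this
  have := Int.le_of_dvd one_pos h1
  omega

/-- With `hC`, the function `C` computes the unique short CF. -/
lemma C_eq (C : ℚ → List ℤ) (hC : ∀ x : ℚ, IsShortCF (C x) ∧ E (C x) = x)
    {t : List ℤ} {x : ℚ} (ht : IsShortCF t) (hE : E t = x) : C x = t :=
  short_unique (C x).length (C x) t le_rfl (hC x).1 ht ((hC x).2.trans hE.symm)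

/-! ### Section 5: the key reconstruction lemma `fCF (C (E s)) = s` -/

lemma Qmain (C : ℚ → List ℤ) (hC : ∀ x : ℚ, IsShortCF (C x) ∧ E (C x) = x) :
    ∀ (n : ℕ) (u v : ℤ), 2 ≤ u → 2 ≤ v → 6 ≤ u * v → ∀ s : List ℤ, Good u v s →
      s.length ≤ n → fCF u v (C (E s)) = s := by
  intro n
  induction n with
  | zero =>
    intro u v _ _ _ s hs hl
    exact absurd (List.length_eq_zero_iff.mp (by omega)) hs.1
  | succ n ih =>
    intro u v hu hv huv s hs hlen
    rcases s with _ | ⟨s0, m⟩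
    · exact absurd rfl hs.1
    have hvs0 : v ∣ s0 := (divProp_cons.mp hs.2.1).1
    rcases m with _ | ⟨s1, m'⟩
    · have h := C_eq C hC (short_singleton s0) (rfl : E [s0] = E [s0])
      rw [h, fCF_single]
    set m : List ℤ := s1 :: m' with hmdef
    have hm : m ≠ [] := by simp [hmdef]
    have hGm : Good v u m := good_tail hs hm
    have hEnts : Ents2 m := good_ents2_tail hu hv hs
    have hEntsm' : Ents2 m' := (ents2_cons.mp hEnts).2
    have habs1 : 2 ≤ |s1| := (ents2_cons.mp hEnts).1
    have hus1 : u ∣ s1 := (divProp_cons.mp hGm.2.1).1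
    have hy1 : 1 < |E m| := (EB1 m hEnts hm).1
    have hEm' : E m = (s1 : ℚ) + 1 / E m' := E_cons s1 m'
    have hr : |1 / E m'| < 1 := by
      rcases eq_or_ne m' [] with rfl | hm'
      · simp [E_nil]
      · have := (EB1 m' hEntsm' hm').1
        rw [abs_div, abs_one, div_lt_one (by linarith)]
        linarith
    have hrne : m' ≠ [] → 1 / E m' ≠ 0 := by
      intro hm' h0
      have h1 := EB1' m' hEntsm' hm'
      rw [div_eq_zero_iff] at h0
      rcases h0 with h0 | h0
      · norm_num at h0
      · exact h1 h0
    have hyavg : |E m - (s1:ℚ)| < 1 := by rw [hEm']; simpa using hr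
    have hsplit : 2 ≤ s1 ∨ s1 ≤ -2 := by
      rcases abs_cases s1 with ⟨he, _⟩ | ⟨he, _⟩ <;> omega
    have hlen1 : m.length ≤ n := by simp [hmdef] at hlen ⊢; omega
    have huv' : 6 ≤ v * u := by rw [mul_comm]; exact huv
    rcases hsplit with hpos | hneg
    · -- CASE A : 2 ≤ s1, tail value > 1
      have hyA : 1 < E m := by
        have h1 : (2 : ℚ) ≤ (s1 : ℚ) := by exact_mod_cast hpos
        have := abs_lt.mp hyavg
        linarith
      obtain ⟨c0, crest, hCy0⟩ := List.exists_cons_of_ne_nil (hC (E m)).1.1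
      have hCyshort : IsShortCF (c0 :: crest) := hCy0 ▸ (hC (E m)).1
      have hlb := short_head_lb hCyshort
      have hCyE : E (c0 :: crest) = E m := by rw [← hCy0]; exact (hC (E m)).2
      have hc0 : 1 ≤ c0 := by
        have h2 := hlb.2
        rw [hCyE] at h2
        have h3 : (0 : ℚ) < (c0 : ℚ) := by linarith
        have h4 : (0 : ℤ) < c0 := by exact_mod_cast h3
        omega
      have hc0s : crest = [] → 2 ≤ c0 := by
        intro hcr
        rw [hcr, E_single] at hCyE
        have h3 : (1 : ℚ) < (c0 : ℚ) := by rw [hCyE]; exact hyA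
        have h4 : (1 : ℤ) < c0 := by exact_mod_cast h3
        omega
      have htpCy : TailPos (c0 :: crest) := by
        refine tailpos_cons c0 hc0 hc0s ?_
        rcases eq_or_ne crest [] with rfl | hcr
        · exact tailpos_nil
        · exact (shortCF_cons_iff hcr).mp hCyshort
      have hts : IsShortCF (s0 :: c0 :: crest) := (shortCF_cons_iff (by simp)).mpr htpCy
      have htE : E (s0 :: c0 :: crest) = E (s0 :: m) := by
        rw [E_cons s0 (c0 :: crest), hCyE, E_cons s0 m]
      rw [C_eq C hC hts htE]
      rw [fCF_else u v s0 c0 crest (Or.inl hvs0), ← hCy0]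
      rw [ih v u hv hu huv' m hGm hlen1]
      rw [hmdef]
      exact oplus_single_cons s0 s1 m' (by omega)
    · -- CASE B : s1 ≤ -2, tail value < -1
      have hs1q : (s1 : ℚ) ≤ -2 := by exact_mod_cast hneg
      have hyB : E m < -1 := by
        have := abs_lt.mp hyavg; linarith
      have hsv : ¬ v ∣ (s0 - 1) := not_dvd_sub_one hv hvs0
      rcases lt_trichotomy (E m) (-2) with hy2 | hy2 | hy2
      · -- B1 : E m < -2
        have hnegm : Good v u (m.map (fun x => -x)) := good_neg hGm
        have hEneg : E (m.map (fun x => -x)) = - E m := E_neg m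
        obtain ⟨c0, crest, hCy0⟩ := List.exists_cons_of_ne_nil (hC (- E m)).1.1
        have hCyshort : IsShortCF (c0 :: crest) := hCy0 ▸ (hC (- E m)).1
        have hlb := short_head_lb hCyshort
        have hCyE : E (c0 :: crest) = - E m := by rw [← hCy0]; exact (hC (- E m)).2
        have hygt : (2 : ℚ) < - E m := by linarith
        have hc0 : 2 ≤ c0 := by
          have h2 := hlb.2
          rw [hCyE] at h2
          have h3 : (1 : ℚ) < (c0 : ℚ) := by linarith
          have h4 : (1 : ℤ) < c0 := by exact_mod_cast h3
          omega
        have hc0s : crest = [] → 3 ≤ c0 := by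
          intro hcr
          rw [hcr, E_single] at hCyE
          have h3 : (2 : ℚ) < (c0 : ℚ) := by rw [hCyE]; exact hygt
          have h4 : (2 : ℤ) < c0 := by exact_mod_cast h3
          omega
        have htpc : TailPos ((c0 - 1) :: crest) := by
          refine tailpos_cons (c0 - 1) (by omega) (fun h => by have := hc0s h; omega) ?_
          rcases eq_or_ne crest [] with rfl | hcr
          · exact tailpos_nil
          · exact (shortCF_cons_iff hcr).mp hCyshort
        have htp1c : TailPos (1 :: (c0 - 1) :: crest) :=
          tailpos_cons 1 le_rfl (fun h => by simp at h) htpc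
        have hts : IsShortCF ((s0 - 1) :: 1 :: (c0 - 1) :: crest) :=
          (shortCF_cons_iff (by simp)).mpr htp1c
        have hw : ((c0 - 1 : ℤ) : ℚ) + 1 / E crest = - E m - 1 := by
          rw [E_cons c0 crest] at hCyE
          push_cast
          push_cast at hCyE
          linarith
        have htE : E ((s0 - 1) :: 1 :: (c0 - 1) :: crest) = E (s0 :: m) := by
          rw [E_cons (s0-1), E_cons 1, E_cons (c0-1), hw, E_cons s0 m]
          have h0 : E m ≠ 0 := by linarith
          have h1 : - E m - 1 ≠ 0 := by linarith
          have h2 : (1 : ℚ) + 1 / (- E m - 1) ≠ 0 := by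
            have : 0 < 1 / (- E m - 1) := by
              apply div_pos one_pos; linarith
            linarith
          push_cast
          field_simp
          rw [show -E m - 1 + 1 = -E m by ring]
          field_simp
          ring
        rw [C_eq C hC hts htE]
        rw [fCF_b1 u v (s0 - 1) (c0 - 1) crest hsv]
        have e1 : c0 - 1 + 1 = c0 := by ring
        have e2 : s0 - 1 + 1 = s0 := by ring
        rw [e1, e2]
        have hCm : C (E (m.map (fun x => -x))) = c0 :: crest := by
          rw [hEneg, hCy0]
        rw [← hCm, ih v u hv hu huv' _ hnegm (by rw [List.length_map]; exact hlen1)]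
        have hmm : (m.map (fun x => -x)).map (fun x => -x) = m := by
          simp [List.map_map, Function.comp]
        rw [hmm, hmdef]
        exact oplus_single_cons s0 s1 m' (by omega)
      · -- B3 : E m = -2 exactly, so m = [-2] and u = 2
        have hs1v : s1 = -2 := by
          have := abs_lt.mp hyavg
          rw [hy2] at this
          have h1 : (-3 : ℚ) < (s1 : ℚ) := by linarith
          have h2 : ((s1 : ℚ)) < -1 := by linarith
          have h1' : (-3 : ℤ) < s1 := by exact_mod_cast h1
          have h2' : s1 < -1 := by exact_mod_cast h2
          omega
        have hm'nil : m' = [] := by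
          by_contra hm'
          rw [hEm', hs1v] at hy2
          push_cast at hy2
          have h0 : 1 / E m' = 0 := by linarith
          exact (hrne hm') h0
        have hts : IsShortCF [s0 - 1, 2] := (shortCF_cons_iff (by simp)).mpr
          (tailpos_cons 2 (by norm_num) (fun _ => le_rfl) tailpos_nil)
        have htE : E [s0 - 1, 2] = E (s0 :: m) := by
          rw [hmdef, hm'nil, hs1v, E_cons (s0-1), E_single, E_cons s0, E_cons (-2), E_nil]
          push_cast
          ring
        rw [C_eq C hC hts htE, fCF_b2nil u v (s0 - 1) hsv, hmdef, hm'nil, hs1v]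
        simp
      · -- B2 : -2 < E m < -3/2 ; here s1 = -2, u = 2, v ≥ 3
        have hs1v : s1 = -2 := by
          have := abs_lt.mp hyavg
          have h1 : (-3 : ℚ) < (s1 : ℚ) := by linarith
          have h1' : (-3 : ℤ) < s1 := by exact_mod_cast h1
          omega
        have hu2 : u = 2 := by
          have h2 : u ∣ 2 := by
            have h3 : u ∣ -s1 := dvd_neg.mpr hus1
            rw [hs1v] at h3; simpa using h3
          have := Int.le_of_dvd (by norm_num) h2
          omega
        have hv3 : 3 ≤ v := by nlinarith
        have hm'ne : m' ≠ [] := by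
          rintro rfl
          rw [hEm', hs1v, E_nil] at hy2
          push_cast at hy2
          norm_num at hy2
        have hGm' : Good u v m' := good_tail hGm hm'ne
        have hm'h : v ∣ m'.getD 0 0 := by
          have := hGm'.2.1 0 (List.length_pos_iff.mpr hm'ne)
          simpa using this
        have hm'hne : m'.getD 0 0 ≠ 0 := by
          have h5 := hGm.2.2 1 one_pos (by rw [hmdef]; simp [List.length_pos_iff.mpr hm'ne])
          simpa [hmdef] using h5
        have hm'habs : 3 ≤ |m'.getD 0 0| := by
          have := Int.le_of_dvd (abs_pos.mpr hm'hne) ((dvd_abs _ _).mpr hm'h)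
          omega
        have hEm'big : 2 < |E m'| := by
          have h6 := (EB1 m' hEntsm' hm'ne).2
          have h3 : (3 : ℚ) ≤ |(m'.getD 0 0 : ℚ)| := by exact_mod_cast hm'habs
          calc (2:ℚ) ≤ |(m'.getD 0 0 : ℚ)| - 1 := by linarith
          _ < |E m'| := h6
        have hEm'ne : E m' ≠ 0 := by
          intro h; rw [h] at hEm'big; norm_num at hEm'big
        have hinv : 1 / E m' = E m + 2 := by rw [hEm', hs1v]; push_cast; ring
        have hyplus : 0 < E m + 2 := by linarith
        have hWpos : 0 < E m' := by
          have := hinv ▸ hyplus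
          exact one_div_pos.mp this
        have hW : 2 < E m' := by rwa [abs_of_pos hWpos] at hEm'big
        have hw1 : 1 < E m' - 1 := by linarith
        obtain ⟨c0, crest, hCy0⟩ := List.exists_cons_of_ne_nil (hC (E m' - 1)).1.1
        have hCyshort : IsShortCF (c0 :: crest) := hCy0 ▸ (hC (E m' - 1)).1
        have hlb := short_head_lb hCyshort
        have hCyE : E (c0 :: crest) = E m' - 1 := by rw [← hCy0]; exact (hC (E m' - 1)).2
        have hc0 : 1 ≤ c0 := by
          have h2 := hlb.2
          rw [hCyE] at h2
          have h3 : (0 : ℚ) < (c0 : ℚ) := by linarith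
          have h4 : (0 : ℤ) < c0 := by exact_mod_cast h3
          omega
        have hc0s : crest = [] → 2 ≤ c0 := by
          intro hcr
          rw [hcr, E_single] at hCyE
          have h3 : (1 : ℚ) < (c0 : ℚ) := by rw [hCyE]; linarith
          have h4 : (1 : ℤ) < c0 := by exact_mod_cast h3
          omega
        have htpc : TailPos (c0 :: crest) := by
          refine tailpos_cons c0 hc0 hc0s ?_
          rcases eq_or_ne crest [] with rfl | hcr
          · exact tailpos_nil
          · exact (shortCF_cons_iff hcr).mp hCyshort
        have htp2c : TailPos (2 :: c0 :: crest) :=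
          tailpos_cons 2 (by norm_num) (fun h => by simp at h) htpc
        have hts : IsShortCF ((s0 - 1) :: 2 :: c0 :: crest) :=
          (shortCF_cons_iff (by simp)).mpr htp2c
        have hEmval : E m = (-2 : ℚ) + 1 / E m' := by rw [hEm', hs1v]; push_cast; ring
        have htE : E ((s0 - 1) :: 2 :: c0 :: crest) = E (s0 :: m) := by
          rw [E_cons (s0-1), E_cons 2, hCyE, E_cons s0 m, hEmval]
          have h1 : E m' - 1 ≠ 0 := by linarith
          have h2 : (2:ℚ) + 1/(E m' - 1) ≠ 0 := by
            have : 0 < 1/(E m' - 1) := by apply div_pos one_pos; linarith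
            linarith
          have e : (-2:ℚ) + 1 / E m' = -((2 * E m' - 1)/ E m') := by
            field_simp
            ring
          have h4 : 2 * E m' - 1 ≠ 0 := by linarith
          rw [e, div_neg]
          push_cast
          field_simp
          ring
        rw [C_eq C hC hts htE]
        rw [fCF_b2 u v (s0 - 1) c0 crest hsv]
        have e2 : s0 - 1 + 1 = s0 := by ring
        rw [e2]
        have hid : u ∣ (-2 : ℤ) := by rw [hu2]; norm_num
        rw [fCF_else v u (-2) (c0 + 1) crest (Or.inl hid)]
        have hts2 : IsShortCF ((c0 + 1) :: crest) := short_head_swap (c0 + 1) hCyshort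
        have htE2 : E ((c0 + 1) :: crest) = E m' := by
          rw [E_cons (c0+1)]
          rw [E_cons c0 crest] at hCyE
          push_cast at hCyE ⊢
          linarith
        have hCm' : C (E m') = (c0 + 1) :: crest := C_eq C hC hts2 htE2
        rw [← hCm', ih u v hu hv huv m' hGm' (by
          rw [hmdef] at hlen1; simp at hlen1 ⊢; omega)]
        obtain ⟨h0, t0, hm'0⟩ := List.exists_cons_of_ne_nil hm'ne
        have hh0 : h0 ≠ 0 := by
          rw [hm'0] at hm'hne; simpa using hm'hne
        rw [hm'0, oplus_single_cons (-2) h0 t0 hh0, ← hm'0]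
        rw [hmdef, hs1v]
        exact oplus_single_cons s0 (-2) m' (by norm_num)

/-! ### Section 6: matrix lemmas -/

lemma mat2_ext {a b c d e f g h : ℤ} (h1 : a = e) (h2 : b = f) (h3 : c = g) (h4 : d = h) :
    !![a, b; c, d] = !![e, f; g, h] := by rw [h1, h2, h3, h4]

@[simp] lemma Rmat_coe (v : ℤ) : ((Rmat v : SL2) : Matrix (Fin 2) (Fin 2) ℤ) = !![1, v; 0, 1] := rfl
@[simp] lemma Lmat_coe (u : ℤ) : ((Lmat u : SL2) : Matrix (Fin 2) (Fin 2) ℤ) = !![1, 0; u, 1] := rfl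

lemma Rmat_inv (v : ℤ) : (Rmat v)⁻¹ = Rmat (-v) := by
  apply inv_eq_of_mul_eq_one_right
  apply Subtype.ext
  rw [Matrix.SpecialLinearGroup.coe_mul, Rmat_coe, Rmat_coe, Matrix.mul_fin_two,
    Matrix.SpecialLinearGroup.coe_one, Matrix.one_fin_two]
  apply mat2_ext <;> ring

lemma Lmat_inv (u : ℤ) : (Lmat u)⁻¹ = Lmat (-u) := by
  apply inv_eq_of_mul_eq_one_right
  apply Subtype.ext
  rw [Matrix.SpecialLinearGroup.coe_mul, Lmat_coe, Lmat_coe, Matrix.mul_fin_two,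
    Matrix.SpecialLinearGroup.coe_one, Matrix.one_fin_two]
  apply mat2_ext <;> ring

lemma Rmat_zpow (v a : ℤ) : ((Rmat v ^ a : SL2) : Matrix (Fin 2) (Fin 2) ℤ) = !![1, a * v; 0, 1] := by
  induction a using Int.induction_on with
  | zero =>
    rw [zpow_zero, Matrix.SpecialLinearGroup.coe_one, Matrix.one_fin_two]
    apply mat2_ext <;> ring
  | succ n ihn =>
    rw [zpow_add_one, Matrix.SpecialLinearGroup.coe_mul, ihn, Rmat_coe, Matrix.mul_fin_two]
    apply mat2_ext <;> push_cast <;> ring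
  | pred n ihn =>
    rw [zpow_sub_one, Matrix.SpecialLinearGroup.coe_mul, ihn, Rmat_inv, Rmat_coe,
      Matrix.mul_fin_two]
    apply mat2_ext <;> push_cast <;> ring

lemma Lmat_zpow (u a : ℤ) : ((Lmat u ^ a : SL2) : Matrix (Fin 2) (Fin 2) ℤ) = !![1, 0; a * u, 1] := by
  induction a using Int.induction_on with
  | zero =>
    rw [zpow_zero, Matrix.SpecialLinearGroup.coe_one, Matrix.one_fin_two]
    apply mat2_ext <;> ring
  | succ n ihn =>
    rw [zpow_add_one, Matrix.SpecialLinearGroup.coe_mul, ihn, Lmat_coe, Matrix.mul_fin_two]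
    apply mat2_ext <;> push_cast <;> ring
  | pred n ihn =>
    rw [zpow_sub_one, Matrix.SpecialLinearGroup.coe_mul, ihn, Lmat_inv, Lmat_coe,
      Matrix.mul_fin_two]
    apply mat2_ext <;> push_cast <;> ring

/-- The congruence-type subgroup whose carrier is `Gscr u v`. -/
def Gsub (u v : ℤ) : Subgroup SL2 where
  carrier := {M | u * v ∣ ((M : Matrix (Fin 2) (Fin 2) ℤ) 0 0 - 1) ∧
    v ∣ (M : Matrix (Fin 2) (Fin 2) ℤ) 0 1 ∧
    u ∣ (M : Matrix (Fin 2) (Fin 2) ℤ) 1 0 ∧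
    u * v ∣ ((M : Matrix (Fin 2) (Fin 2) ℤ) 1 1 - 1)}
  one_mem' := by
    constructor
    · simp [Matrix.SpecialLinearGroup.coe_one]
    constructor
    · simp [Matrix.SpecialLinearGroup.coe_one]
    constructor
    · simp [Matrix.SpecialLinearGroup.coe_one]
    · simp [Matrix.SpecialLinearGroup.coe_one]
  mul_mem' := by
    rintro A B ⟨a1, a2, a3, a4⟩ ⟨b1, b2, b3, b4⟩
    have h00 : ((A * B : SL2) : Matrix (Fin 2) (Fin 2) ℤ) 0 0 =
        (A : Matrix (Fin 2) (Fin 2) ℤ) 0 0 * (B : Matrix (Fin 2) (Fin 2) ℤ) 0 0 +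
        (A : Matrix (Fin 2) (Fin 2) ℤ) 0 1 * (B : Matrix (Fin 2) (Fin 2) ℤ) 1 0 := by
      rw [Matrix.SpecialLinearGroup.coe_mul, Matrix.mul_apply, Fin.sum_univ_two]
    have h01 : ((A * B : SL2) : Matrix (Fin 2) (Fin 2) ℤ) 0 1 =
        (A : Matrix (Fin 2) (Fin 2) ℤ) 0 0 * (B : Matrix (Fin 2) (Fin 2) ℤ) 0 1 +
        (A : Matrix (Fin 2) (Fin 2) ℤ) 0 1 * (B : Matrix (Fin 2) (Fin 2) ℤ) 1 1 := by
      rw [Matrix.SpecialLinearGroup.coe_mul, Matrix.mul_apply, Fin.sum_univ_two]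
    have h10 : ((A * B : SL2) : Matrix (Fin 2) (Fin 2) ℤ) 1 0 =
        (A : Matrix (Fin 2) (Fin 2) ℤ) 1 0 * (B : Matrix (Fin 2) (Fin 2) ℤ) 0 0 +
        (A : Matrix (Fin 2) (Fin 2) ℤ) 1 1 * (B : Matrix (Fin 2) (Fin 2) ℤ) 1 0 := by
      rw [Matrix.SpecialLinearGroup.coe_mul, Matrix.mul_apply, Fin.sum_univ_two]
    have h11 : ((A * B : SL2) : Matrix (Fin 2) (Fin 2) ℤ) 1 1 =
        (A : Matrix (Fin 2) (Fin 2) ℤ) 1 0 * (B : Matrix (Fin 2) (Fin 2) ℤ) 0 1 +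
        (A : Matrix (Fin 2) (Fin 2) ℤ) 1 1 * (B : Matrix (Fin 2) (Fin 2) ℤ) 1 1 := by
      rw [Matrix.SpecialLinearGroup.coe_mul, Matrix.mul_apply, Fin.sum_univ_two]
    refine ⟨?_, ?_, ?_, ?_⟩
    · rw [h00]
      have key : (A : Matrix (Fin 2) (Fin 2) ℤ) 0 0 * (B : Matrix (Fin 2) (Fin 2) ℤ) 0 0 +
          (A : Matrix (Fin 2) (Fin 2) ℤ) 0 1 * (B : Matrix (Fin 2) (Fin 2) ℤ) 1 0 - 1 =
          ((A : Matrix (Fin 2) (Fin 2) ℤ) 0 0 - 1) * (B : Matrix (Fin 2) (Fin 2) ℤ) 0 0 +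
          ((B : Matrix (Fin 2) (Fin 2) ℤ) 0 0 - 1) +
          (A : Matrix (Fin 2) (Fin 2) ℤ) 0 1 * (B : Matrix (Fin 2) (Fin 2) ℤ) 1 0 := by ring
      rw [key]
      refine dvd_add (dvd_add (a1.mul_right _) b1) ?_
      rw [show u * v = v * u from mul_comm u v]
      exact mul_dvd_mul a2 b3
    · rw [h01]
      exact dvd_add (b2.mul_left _) (a2.mul_right _)
    · rw [h10]
      exact dvd_add (a3.mul_right _) (b3.mul_left _)
    · rw [h11]
      have key : (A : Matrix (Fin 2) (Fin 2) ℤ) 1 0 * (B : Matrix (Fin 2) (Fin 2) ℤ) 0 1 +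
          (A : Matrix (Fin 2) (Fin 2) ℤ) 1 1 * (B : Matrix (Fin 2) (Fin 2) ℤ) 1 1 - 1 =
          (A : Matrix (Fin 2) (Fin 2) ℤ) 1 0 * (B : Matrix (Fin 2) (Fin 2) ℤ) 0 1 +
          ((A : Matrix (Fin 2) (Fin 2) ℤ) 1 1 - 1) * (B : Matrix (Fin 2) (Fin 2) ℤ) 1 1 +
          ((B : Matrix (Fin 2) (Fin 2) ℤ) 1 1 - 1) := by ring
      rw [key]
      exact dvd_add (dvd_add (mul_dvd_mul a3 b2) (a4.mul_right _)) b4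
  inv_mem' := by
    rintro A ⟨a1, a2, a3, a4⟩
    rw [Set.mem_setOf_eq, Matrix.SpecialLinearGroup.SL2_inv_expl A]
    refine ⟨by simpa using a4, by simpa using (dvd_neg.mpr a2), by simpa using (dvd_neg.mpr a3),
      by simpa using a1⟩

lemma Guv_le_Gsub (u v : ℤ) : Guv u v ≤ Gsub u v := by
  rw [Guv, Subgroup.closure_le]
  rintro x (rfl | rfl)
  · exact ⟨by simp, by simp, by simp, by simp⟩
  · exact ⟨by simp, by simp, by simp, by simp⟩

lemma Gscr_mem_Gsub {u v : ℤ} {M : SL2} (hM : M ∈ Gscr u v) : M ∈ Gsub u v := by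
  obtain ⟨n1, n2, n3, n4, h⟩ := hM
  refine ⟨?_, ?_, ?_, ?_⟩ <;> rw [h] <;> simp

/-- K-trick: two elements of the congruence subgroup with the same second column
differ by a power of `Lmat u`. -/
lemma mem_Guv_of_col {u v : ℤ} (huv6 : 6 ≤ u * v) {M N : SL2}
    (hM : M ∈ Gsub u v) (hNG : N ∈ Guv u v)
    (h01 : (N : Matrix (Fin 2) (Fin 2) ℤ) 0 1 = (M : Matrix (Fin 2) (Fin 2) ℤ) 0 1)
    (h11 : (N : Matrix (Fin 2) (Fin 2) ℤ) 1 1 = (M : Matrix (Fin 2) (Fin 2) ℤ) 1 1) :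
    M ∈ Guv u v := by
  have hN : N ∈ Gsub u v := Guv_le_Gsub u v hNG
  have hP : N⁻¹ * M ∈ Gsub u v := mul_mem (inv_mem hN) hM
  have hP01 : ((N⁻¹ * M : SL2) : Matrix (Fin 2) (Fin 2) ℤ) 0 1 = 0 := by
    rw [Matrix.SpecialLinearGroup.coe_mul, Matrix.SpecialLinearGroup.SL2_inv_expl N,
      Matrix.mul_apply, Fin.sum_univ_two]
    simp only [Matrix.cons_val_zero, Matrix.cons_val_one, Matrix.head_cons]
    rw [h01, h11]
    ring
  have hdet : ((N⁻¹ * M : SL2) : Matrix (Fin 2) (Fin 2) ℤ).det = 1 :=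
    Matrix.SpecialLinearGroup.det_coe _
  rw [Matrix.det_fin_two, hP01] at hdet
  simp only [zero_mul, sub_zero] at hdet
  have hP00 : ((N⁻¹ * M : SL2) : Matrix (Fin 2) (Fin 2) ℤ) 0 0 = 1 ∧
      ((N⁻¹ * M : SL2) : Matrix (Fin 2) (Fin 2) ℤ) 1 1 = 1 := by
    rcases Int.eq_one_or_neg_one_of_mul_eq_one' hdet with ⟨h1, h2⟩ | ⟨h1, h2⟩
    · exact ⟨h1, h2⟩
    · exfalso
      have := hP.1
      rw [h1] at this
      have h2' : u * v ∣ 2 := by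
        have := dvd_neg.mpr this
        simpa using this
      have := Int.le_of_dvd (by norm_num) h2'
      omega
  obtain ⟨k, hk⟩ := hP.2.2.1
  have hPL : N⁻¹ * M = Lmat u ^ k := by
    apply Subtype.ext
    rw [Lmat_zpow]
    ext i j
    fin_cases i <;> fin_cases j
    · simpa using hP00.1
    · simpa using hP01
    · have e10 : ((N⁻¹ * M : SL2) : Matrix (Fin 2) (Fin 2) ℤ) 1 0 = k * u := by
        rw [hk]; ring
      simpa using e10
    · simpa using hP00.2
  have hM' : M = N * (N⁻¹ * M) := (mul_inv_cancel_left N M).symm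
  rw [hM', hPL]
  exact mul_mem hNG (Subgroup.zpow_mem _ (Subgroup.subset_closure (by simp)) k)

/-! ### Section 7: columns of alternating products -/

lemma altProd_nil (u v : ℤ) (b : Bool) : altProd u v b [] = 1 := by cases b <;> rfl

lemma altProd_true_cons (u v a : ℤ) (l : List ℤ) :
    altProd u v true (a :: l) = Rmat v ^ a * altProd u v false l := rfl

lemma altProd_false_cons (u v a : ℤ) (l : List ℤ) :
    altProd u v false (a :: l) = Lmat u ^ a * altProd u v true l := rfl

lemma altProd_zero_cons (u v b : ℤ) (l : List ℤ) :
    altProd u v true (0 :: b :: l) = Lmat u ^ b * altProd u v true l := by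
  rw [altProd_true_cons, altProd_false_cons, zpow_zero, one_mul]

lemma altProd_mem (u v : ℤ) : ∀ (l : List ℤ) (b : Bool), altProd u v b l ∈ Guv u v := by
  intro l
  induction l with
  | nil => intro b; rw [altProd_nil]; exact one_mem _
  | cons a l ih =>
    intro b
    cases b
    · rw [altProd_false_cons]
      exact mul_mem (Subgroup.zpow_mem _ (Subgroup.subset_closure (by simp)) a) (ih true)
    · rw [altProd_true_cons]
      exact mul_mem (Subgroup.zpow_mem _ (Subgroup.subset_closure (by simp)) a) (ih false)

/-- Second column of an `SL2` element. -/
def colv (M : SL2) : ℤ × ℤ := ((M : Matrix (Fin 2) (Fin 2) ℤ) 0 1, (M : Matrix (Fin 2) (Fin 2) ℤ) 1 1)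

lemma colv_one : colv 1 = (0, 1) := by
  simp [colv, Matrix.SpecialLinearGroup.coe_one, Matrix.one_fin_two]

lemma colv_R (v a : ℤ) (P : SL2) :
    colv (Rmat v ^ a * P) = ((colv P).1 + (a * v) * (colv P).2, (colv P).2) := by
  unfold colv
  rw [Matrix.SpecialLinearGroup.coe_mul, Rmat_zpow]
  have h1 : (!![1, a * v; 0, 1] * (P : Matrix (Fin 2) (Fin 2) ℤ)) 0 1 =
      (P : Matrix (Fin 2) (Fin 2) ℤ) 0 1 + a * v * (P : Matrix (Fin 2) (Fin 2) ℤ) 1 1 := by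
    rw [Matrix.mul_apply, Fin.sum_univ_two]; simp [mul_comm]; try ring
  have h2 : (!![1, a * v; 0, 1] * (P : Matrix (Fin 2) (Fin 2) ℤ)) 1 1 =
      (P : Matrix (Fin 2) (Fin 2) ℤ) 1 1 := by
    rw [Matrix.mul_apply, Fin.sum_univ_two]; simp
  rw [h1, h2]

lemma colv_L (u b : ℤ) (P : SL2) :
    colv (Lmat u ^ b * P) = ((colv P).1, (colv P).2 + (b * u) * (colv P).1) := by
  unfold colv
  rw [Matrix.SpecialLinearGroup.coe_mul, Lmat_zpow]
  have h1 : (!![1, 0; b * u, 1] * (P : Matrix (Fin 2) (Fin 2) ℤ)) 0 1 =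
      (P : Matrix (Fin 2) (Fin 2) ℤ) 0 1 := by
    rw [Matrix.mul_apply, Fin.sum_univ_two]; simp
  have h2 : (!![1, 0; b * u, 1] * (P : Matrix (Fin 2) (Fin 2) ℤ)) 1 1 =
      (P : Matrix (Fin 2) (Fin 2) ℤ) 1 1 + b * u * (P : Matrix (Fin 2) (Fin 2) ℤ) 0 1 := by
    rw [Matrix.mul_apply, Fin.sum_univ_two]; simp [mul_comm]; try ring
  rw [h1, h2]

/-- Scaling of an exponent list (alternately by `v` and `u`). -/
def sc (u v : ℤ) : Bool → List ℤ → List ℤ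
  | _, [] => []
  | true, a :: l => a * v :: sc u v false l
  | false, a :: l => a * u :: sc u v true l

/-- Unscaling. -/
def usc (u v : ℤ) : Bool → List ℤ → List ℤ
  | _, [] => []
  | true, a :: l => a / v :: usc u v false l
  | false, a :: l => a / u :: usc u v true l

lemma sc_usc (u v : ℤ) : ∀ (l : List ℤ),
    (DivProp u v l → sc u v true (usc u v true l) = l) ∧
    (DivProp v u l → sc u v false (usc u v false l) = l) := by
  intro l
  induction l with
  | nil => exact ⟨fun _ => rfl, fun _ => rfl⟩
  | cons a l ih =>
    constructor
    · intro h
      obtain ⟨ha, hl⟩ := divProp_cons.mp h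
      show a / v * v :: sc u v false (usc u v false l) = a :: l
      rw [Int.ediv_mul_cancel ha, ih.2 hl]
    · intro h
      obtain ⟨ha, hl⟩ := divProp_cons.mp h
      show a / u * u :: sc u v true (usc u v true l) = a :: l
      rw [Int.ediv_mul_cancel ha, ih.1 hl]

lemma divProp_sc (u v : ℤ) : ∀ (l : List ℤ),
    DivProp u v (sc u v true l) ∧ DivProp v u (sc u v false l) := by
  intro l
  induction l with
  | nil => exact ⟨fun i hi => by simp [sc] at hi, fun i hi => by simp [sc] at hi⟩
  | cons a l ih =>
    constructor
    · show DivProp u v (a * v :: sc u v false l)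
      exact divProp_cons.mpr ⟨dvd_mul_left v a, ih.2⟩
    · show DivProp v u (a * u :: sc u v true l)
      exact divProp_cons.mpr ⟨dvd_mul_left u a, ih.1⟩

lemma sc_nz_all (u v : ℤ) (hu : u ≠ 0) (hv : v ≠ 0) : ∀ (l : List ℤ) (b : Bool),
    (∀ i, i < l.length → l.getD i 0 ≠ 0) →
    ∀ i, i < (sc u v b l).length → (sc u v b l).getD i 0 ≠ 0 := by
  intro l
  induction l with
  | nil => intro b _ i hi; cases b <;> simp [sc] at hi
  | cons a l ih =>
    intro b h i hi
    have ha : a ≠ 0 := by simpa using h 0 (by simp)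
    have hl : ∀ i, i < l.length → l.getD i 0 ≠ 0 := fun i hi => by
      simpa using h (i + 1) (by simpa using Nat.succ_lt_succ hi)
    cases b
    · show ((a * u :: sc u v true l).getD i 0 ≠ 0)
      cases i with
      | zero => simpa using mul_ne_zero ha hu
      | succ j =>
        rw [List.getD_cons_succ]
        exact ih true hl j (by
          have : (sc u v false (a :: l)).length = (sc u v true l).length + 1 := by
            show (a * u :: sc u v true l).length = _
            simp
          rw [this] at hi
          omega)
    · show ((a * v :: sc u v false l).getD i 0 ≠ 0)
      cases i with
      | zero => simpa using mul_ne_zero ha hv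
      | succ j =>
        rw [List.getD_cons_succ]
        exact ih false hl j (by
          have : (sc u v true (a :: l)).length = (sc u v false l).length + 1 := by
            show (a * v :: sc u v false l).length = _
            simp
          rw [this] at hi
          omega)

lemma sc_length (u v : ℤ) : ∀ (l : List ℤ) (b : Bool), (sc u v b l).length = l.length := by
  intro l
  induction l with
  | nil => intro b; cases b <;> rfl
  | cons a l ih =>
    intro b
    cases b
    · show (a * u :: sc u v true l).length = _
      simp [ih true]
    · show (a * v :: sc u v false l).length = _
      simp [ih false]

/-- `cp` computes the second column of the alternating product of the scaled list. -/
def cp : List ℤ → ℤ × ℤ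
  | [] => (0, 1)
  | [a] => (a, 1)
  | a :: b :: l => ((cp l).1 + a * ((cp l).2 + b * (cp l).1), (cp l).2 + b * (cp l).1)

lemma cp_cons (a b : ℤ) (l : List ℤ) :
    cp (a :: b :: l) = ((cp l).1 + a * ((cp l).2 + b * (cp l).1), (cp l).2 + b * (cp l).1) := rfl

theorem colv_altProd (u v : ℤ) : ∀ (l : List ℤ),
    colv (altProd u v true l) = cp (sc u v true l)
  | [] => by rw [altProd_nil, colv_one]; rfl
  | [a] => by
    rw [altProd_true_cons, altProd_nil, colv_R, colv_one]
    show _ = cp [a * v]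
    simp [cp]
  | a :: b :: l => by
    have ih := colv_altProd u v l
    rw [altProd_true_cons, altProd_false_cons, colv_R, colv_L, ih]
    show _ = cp (a * v :: b * u :: sc u v true l)
    rw [cp_cons]

/-! ### Section 8: cp spec, ep machinery, word representation -/

lemma cp_nil : cp [] = (0, 1) := rfl
lemma cp_single (a : ℤ) : cp [a] = (a, 1) := rfl

theorem cp_dropLast : ∀ (l : List ℤ), l.length % 2 = 0 → l ≠ [] → cp l = cp l.dropLast
  | [] => fun _ h => absurd rfl h
  | [a] => fun h _ => by simp at h
  | [a, b] => fun _ _ => by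
    show cp [a, b] = cp [a]
    rw [cp_cons, cp_nil, cp_single]
    simp
  | a :: b :: c :: l => fun h _ => by
    have hpar : (c :: l).length % 2 = 0 := by simp at h ⊢; omega
    have ih := cp_dropLast (c :: l) hpar (by simp)
    show cp (a :: b :: c :: l) = cp ((a :: b :: c :: l).dropLast)
    have hd : (a :: b :: c :: l).dropLast = a :: b :: (c :: l).dropLast := by simp
    rw [hd, cp_cons, cp_cons, ih]

theorem cp_spec : ∀ (s : List ℤ), Ents2 (s.drop 1) → s.length % 2 = 1 →
    (cp s).2 ≠ 0 ∧ ((cp s).1 : ℚ) = E s * ((cp s).2 : ℚ)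
  | [] => fun _ h => by simp at h
  | [a] => fun _ _ => by
    rw [cp_single]
    exact ⟨one_ne_zero, by rw [E_single]; simp⟩
  | a :: b :: l => fun hents hodd => by
    have hl : l.length % 2 = 1 := by simp at hodd; omega
    have hlne : l ≠ [] := by intro h; rw [h] at hl; simp at hl
    have hents' : Ents2 (b :: l) := by simpa using hents
    have hb : 2 ≤ |b| := (ents2_cons.mp hents').1
    have hEl2 : Ents2 l := (ents2_cons.mp hents').2
    have hldrop : Ents2 (l.drop 1) := by
      rcases l with _ | ⟨c, l'⟩
      · exact ents2_nil
      · exact (ents2_cons.mp hEl2).2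
    obtain ⟨hD, hBD⟩ := cp_spec l hldrop hl
    have hEl : 1 < |E l| := (EB1 l hEl2 hlne).1
    have hElne : E l ≠ 0 := by intro h; rw [h] at hEl; norm_num at hEl
    have hDq : ((cp l).2 : ℚ) ≠ 0 := Int.cast_ne_zero.mpr hD
    have hbq : (2 : ℚ) ≤ |(b : ℚ)| := by exact_mod_cast hb
    have h1Y : 1 + (b : ℚ) * E l ≠ 0 := by
      intro h
      have h2 : |(b : ℚ) * E l| = 1 := by
        have : (b : ℚ) * E l = -1 := by linarith
        rw [this]; norm_num
      rw [abs_mul] at h2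
      nlinarith [abs_nonneg (E l), abs_nonneg ((b : ℚ))]
    have hD' : ((cp l).2 + b * (cp l).1 : ℤ) ≠ 0 := by
      intro h0
      have h0q : ((cp l).2 : ℚ) + (b : ℚ) * ((cp l).1 : ℚ) = 0 := by exact_mod_cast h0
      rw [hBD] at h0q
      have : ((cp l).2 : ℚ) * (1 + (b:ℚ) * E l) = 0 := by ring_nf; ring_nf at h0q; linarith
      rcases mul_eq_zero.mp this with h | h
      · exact hDq h
      · exact h1Y h
    rw [cp_cons]
    refine ⟨hD', ?_⟩
    have hbY : (b : ℚ) + 1 / E l ≠ 0 := by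
      intro h
      have h2 : (b : ℚ) = -(1 / E l) := by linarith
      have h3 : |(b : ℚ)| = |1 / E l| := by rw [h2, abs_neg]
      have h4 : |1 / E l| < 1 := by
        rw [abs_div, abs_one, div_lt_one (by linarith)]
        exact hEl
      linarith
    rw [E_cons a, E_cons b]
    push_cast
    rw [hBD]
    have h1Y' : (1:ℚ) + E l * (b:ℚ) ≠ 0 := by
      rw [mul_comm (E l) ((b:ℚ))]; exact h1Y
    have e : (b:ℚ) + 1 / E l = (1 + E l * (b:ℚ)) / E l := by
      field_simp; ring
    rw [e, one_div_div]
    field_simp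
    ring

/-- The `ep` pair: numerator and denominator of `E`. -/
def ep : List ℤ → ℤ × ℤ
  | [] => (0, 1)
  | a :: l => if (ep l).1 = 0 then (a, 1) else (a * (ep l).1 + (ep l).2, (ep l).1)

lemma ep_nil : ep [] = (0, 1) := rfl
lemma ep_cons (a : ℤ) (l : List ℤ) :
    ep (a :: l) = if (ep l).1 = 0 then (a, 1) else (a * (ep l).1 + (ep l).2, (ep l).1) := rfl

lemma ep_step (a : ℤ) (m : List ℤ)
    (hspec : (ep m).1 ≠ 0 ∧ (ep m).2 ≠ 0 ∧ ((ep m).1 : ℚ) = E m * (ep m).2 ∧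
      IsCoprime (ep m).1 (ep m).2) :
    (ep (a :: m)).2 ≠ 0 ∧
      ((ep (a :: m)).1 : ℚ) = E (a :: m) * (ep (a :: m)).2 ∧
      IsCoprime (ep (a :: m)).1 (ep (a :: m)).2 ∧ (ep (a :: m)).2 = (ep m).1 := by
  obtain ⟨hp, hq, hval, hcop⟩ := hspec
  have hpq : ((ep m).1 : ℚ) ≠ 0 := Int.cast_ne_zero.mpr hp
  have hqq : ((ep m).2 : ℚ) ≠ 0 := Int.cast_ne_zero.mpr hq
  have hEm : E m ≠ 0 := by
    intro h; rw [h, zero_mul] at hval; exact hpq hval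
  have hvalue : ((a * (ep m).1 + (ep m).2 : ℤ) : ℚ) = E (a :: m) * (ep m).1 := by
    rw [E_cons]
    push_cast
    rw [hval]
    field_simp
  refine ⟨by rw [ep_cons, if_neg hp]; exact hp, by rw [ep_cons, if_neg hp]; exact hvalue, ?_,
    by rw [ep_cons, if_neg hp]⟩
  rw [ep_cons, if_neg hp]
  have h := (hcop.symm).add_mul_left_left a
  rwa [show (ep m).2 + (ep m).1 * a = a * (ep m).1 + (ep m).2 from by ring] at h

theorem ep_spec : ∀ (l : List ℤ), Ents2 l → l ≠ [] →
    (ep l).1 ≠ 0 ∧ (ep l).2 ≠ 0 ∧ ((ep l).1 : ℚ) = E l * (ep l).2 ∧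
      IsCoprime (ep l).1 (ep l).2
  | [] => fun _ h => absurd rfl h
  | [a] => fun hents _ => by
    rw [ep_cons, ep_nil, if_pos rfl]
    have ha : 2 ≤ |a| := by simpa using hents 0 (by simp)
    refine ⟨by rcases abs_cases a with ⟨h, _⟩ | ⟨h, _⟩ <;> omega, one_ne_zero,
      by rw [E_single]; simp, isCoprime_one_right⟩
  | a :: b :: m => fun hents _ => by
    have h1 := ep_spec (b :: m) (ents2_cons.mp hents).2 (by simp)
    have hE1 : 1 < |E (a :: b :: m)| := (EB1 _ hents (by simp)).1
    obtain ⟨hq, hval, hcop, _⟩ := ep_step a (b :: m) h1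
    have hEane : E (a :: b :: m) ≠ 0 := by
      intro h; rw [h] at hE1; norm_num at hE1
    refine ⟨?_, hq, hval, hcop⟩
    intro h0
    rw [h0] at hval
    have := mul_ne_zero hEane (Int.cast_ne_zero.mpr hq)
    exact this (by exact_mod_cast hval.symm)

theorem ep_mod (u v : ℤ) : ∀ (w : List ℤ), Ents2 w → DivProp v u w → w.length % 2 = 1 →
    u ∣ (ep w).1
  | [] => fun _ _ h => by simp at h
  | [w0] => fun _ hdiv _ => by
    rw [ep_cons, ep_nil, if_pos rfl]
    exact (divProp_cons.mp hdiv).1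
  | w0 :: w1 :: w' => fun hents hdiv hodd => by
    have hw' : w'.length % 2 = 1 := by simp at hodd; omega
    have hw'ne : w' ≠ [] := by intro h; rw [h] at hw'; simp at hw'
    have hents1 : Ents2 (w1 :: w') := (ents2_cons.mp hents).2
    have hents' : Ents2 w' := (ents2_cons.mp hents1).2
    have hp1 := (ep_spec (w1 :: w') hents1 (by simp)).1
    have hpw' := (ep_spec w' hents' hw'ne).1
    have hdvd0 : u ∣ w0 := (divProp_cons.mp hdiv).1
    have hdivw' : DivProp v u w' :=
      (divProp_cons.mp (divProp_cons.mp hdiv).2).2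
    have ih := ep_mod u v w' hents' hdivw' hw'
    rw [ep_cons, if_neg hp1]
    have hq1 : (ep (w1 :: w')).2 = (ep w').1 := by
      rw [ep_cons, if_neg hpw']
    show u ∣ w0 * (ep (w1 :: w')).1 + (ep (w1 :: w')).2
    rw [hq1]
    exact dvd_add (hdvd0.mul_right _) ih

/-! word representation with nonzero interior exponents -/

def IntNZ (l : List ℤ) : Prop := ∀ i, 0 < i → i < l.length → l.getD i 0 ≠ 0

lemma all_of_intNZ_cons {a : ℤ} {l : List ℤ} (h : IntNZ (a :: l)) :
    ∀ i, i < l.length → l.getD i 0 ≠ 0 := fun i hl => by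
  have := h (i + 1) (by omega) (by simp; omega)
  simpa using this

lemma prepend_R (u v ε : ℤ) (l : List ℤ) (hnz : IntNZ l) :
    ∃ l', altProd u v true l' = Rmat v ^ ε * altProd u v true l ∧ IntNZ l' := by
  cases l with
  | nil =>
    refine ⟨[ε], ?_, ?_⟩
    · simp [altProd_true_cons, altProd_false_cons, altProd_nil]
    · intro i hi hl
      simp only [List.length_cons, List.length_nil] at hl
      omega
  | cons a l =>
    refine ⟨(ε + a) :: l, ?_, ?_⟩
    · rw [altProd_true_cons, altProd_true_cons, zpow_add, mul_assoc]
    · intro i hi hl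
      obtain ⟨j, rfl⟩ : ∃ j, i = j + 1 := ⟨i - 1, by omega⟩
      rw [List.getD_cons_succ]
      have := hnz (j + 1) (by omega) (by simp at hl ⊢; omega)
      rwa [List.getD_cons_succ] at this

lemma prepend_L (u v ε : ℤ) (hε : ε ≠ 0) (l : List ℤ) (hnz : IntNZ l) :
    ∃ l', altProd u v true l' = Lmat u ^ ε * altProd u v true l ∧ IntNZ l' := by
  cases l with
  | nil =>
    refine ⟨[0, ε], ?_, ?_⟩
    · simp [altProd_zero_cons, altProd_nil, altProd_true_cons, altProd_false_cons]
    · intro i hi hl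
      simp only [List.length_cons, List.length_nil] at hl
      interval_cases i
      · simpa using hε
  | cons a l₂ =>
    by_cases ha : a = 0
    · subst ha
      cases l₂ with
      | nil =>
        refine ⟨[0, ε], ?_, ?_⟩
        · simp [altProd_zero_cons, altProd_nil, altProd_true_cons, altProd_false_cons]
        · intro i hi hl
          simp only [List.length_cons, List.length_nil] at hl
          interval_cases i
          · simpa using hε
      | cons b l₃ =>
        have hb : b ≠ 0 := by
          have := hnz 1 one_pos (by simp)
          simpa using this
        by_cases hbe : ε + b = 0
        · refine ⟨l₃, ?_, ?_⟩
          · rw [altProd_zero_cons, ← mul_assoc, ← zpow_add, hbe, zpow_zero, one_mul]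
          · intro i hi hl
            have := hnz (i + 2) (by omega) (by simp; omega)
            simpa using this
        · refine ⟨0 :: (ε + b) :: l₃, ?_, ?_⟩
          · rw [altProd_zero_cons, altProd_zero_cons, zpow_add, mul_assoc]
          · intro i hi hl
            simp only [List.length_cons] at hl
            obtain ⟨j, rfl⟩ : ∃ j, i = j + 1 := ⟨i - 1, by omega⟩
            rw [List.getD_cons_succ]
            cases j with
            | zero => simpa using hbe
            | succ j' =>
              rw [List.getD_cons_succ]
              have := hnz (j' + 2) (by omega) (by simp; omega)
              simpa using this
    · refine ⟨0 :: ε :: a :: l₂, ?_, ?_⟩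
      · rw [altProd_zero_cons]
      · intro i hi hl
        simp only [List.length_cons] at hl
        obtain ⟨j, rfl⟩ : ∃ j, i = j + 1 := ⟨i - 1, by omega⟩
        rw [List.getD_cons_succ]
        cases j with
        | zero => simpa using hε
        | succ j' =>
          rw [List.getD_cons_succ]
          cases j' with
          | zero => simpa using ha
          | succ j'' =>
            rw [List.getD_cons_succ]
            have := hnz (j'' + 1) (by omega) (by simp; omega)
            simpa using this

lemma exists_altProd {u v : ℤ} {M : SL2} (hM : M ∈ Guv u v) :
    ∃ l : List ℤ, altProd u v true l = M ∧ IntNZ l := by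
  have h1 : M ∈ Submonoid.closure (({Lmat u, Rmat v} : Set SL2) ∪
      ({Lmat u, Rmat v} : Set SL2)⁻¹) := by
    have h2 : M ∈ (Subgroup.closure ({Lmat u, Rmat v} : Set SL2)).toSubmonoid := hM
    rwa [Subgroup.closure_toSubmonoid] at h2
  obtain ⟨L, hL, hprod⟩ := Submonoid.exists_list_of_mem_closure h1
  subst hprod
  clear h1 hM
  induction L with
  | nil =>
    exact ⟨[], by rw [altProd_nil, List.prod_nil], fun i hi hl => by simp at hl⟩
  | cons y ys ih =>
    obtain ⟨l, hl, hnz⟩ := ih (fun z hz => hL z (by simp [hz]))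
    have hy := hL y (by simp)
    rw [List.prod_cons, ← hl]
    simp only [Set.mem_union, Set.mem_inv, Set.mem_insert_iff, Set.mem_singleton_iff] at hy
    rcases hy with (rfl | rfl) | (hyL | hyR)
    · obtain ⟨l', hl', hnz'⟩ := prepend_L u v 1 one_ne_zero l hnz
      exact ⟨l', by rw [hl', zpow_one], hnz'⟩
    · obtain ⟨l', hl', hnz'⟩ := prepend_R u v 1 l hnz
      exact ⟨l', by rw [hl', zpow_one], hnz'⟩
    · have hyy : y = (Lmat u) ^ (-1 : ℤ) := by
        rw [zpow_neg_one, ← hyL, inv_inv]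
      obtain ⟨l', hl', hnz'⟩ := prepend_L u v (-1) (by norm_num) l hnz
      exact ⟨l', by rw [hl', ← hyy], hnz'⟩
    · have hyy : y = (Rmat v) ^ (-1 : ℤ) := by
        rw [zpow_neg_one, ← hyR, inv_inv]
      obtain ⟨l', hl', hnz'⟩ := prepend_R u v (-1) l hnz
      exact ⟨l', by rw [hl', ← hyy], hnz'⟩

/-! ### Section 9: final assembly -/

lemma getD_dropLast (l : List ℤ) (i : ℕ) (h : i < l.length - 1) :
    l.dropLast.getD i 0 = l.getD i 0 := by
  have h1 : i < l.dropLast.length := by rw [List.length_dropLast]; exact h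
  have h2 : i < l.length := by omega
  rw [List.getD_eq_getElem _ _ h1, List.getD_eq_getElem _ _ h2, List.getElem_dropLast]

lemma nz_of_tails (t : List ℤ) (htails : ∀ i, 0 < i → i < t.length → 1 < |E (t.drop i)|) :
    ∀ i, 0 < i → i < t.length → t.getD i 0 ≠ 0 := by
  intro i hi hl h0
  have hdrop : t.drop i = t.getD i 0 :: t.drop (i + 1) := by
    rw [List.getD_eq_getElem t 0 hl]
    exact List.drop_eq_getElem_cons hl
  have hEi := htails i hi hl
  rw [hdrop, h0, E_cons] at hEi
  push_cast at hEi
  rw [zero_add] at hEi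
  rcases lt_or_ge (i + 1) t.length with h2 | h2
  · have h3 := htails (i + 1) (by omega) h2
    have hne : E (t.drop (i + 1)) ≠ 0 := fun h => by rw [h] at h3; norm_num at h3
    have h4 : |1 / E (t.drop (i + 1))| < 1 := by
      rw [abs_div, abs_one, div_lt_one (by positivity)]
      exact h3
    linarith
  · have h3 : t.drop (i + 1) = [] := List.drop_eq_nil_of_le h2
    rw [h3, E_nil] at hEi
    norm_num at hEi

lemma sc_intNZ (u v : ℤ) (hu : u ≠ 0) (hv : v ≠ 0) (l : List ℤ) (h : IntNZ l) :
    IntNZ (sc u v true l) := by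
  cases l with
  | nil => intro i hi hl; simp [sc] at hl
  | cons a l₂ =>
    intro i hi hl
    show ((a * v :: sc u v false l₂).getD i 0 ≠ 0)
    obtain ⟨j, rfl⟩ : ∃ j, i = j + 1 := ⟨i - 1, by omega⟩
    rw [List.getD_cons_succ]
    refine sc_nz_all u v hu hv l₂ false (all_of_intNZ_cons h) j ?_
    have : (sc u v true (a :: l₂)).length = (sc u v false l₂).length + 1 := by
      show (a * v :: sc u v false l₂).length = _
      simp
    rw [this] at hl
    omega

theorem membership_criterion' (u v : ℤ) (hu : 2 ≤ u) (hv : 2 ≤ v) (huv : u * v ≠ 4)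
    (C : ℚ → List ℤ) (hC : ∀ x : ℚ, IsShortCF (C x) ∧ E (C x) = x)
    (M : SL2) (hM : M ∈ Gscr u v) :
    M ∈ Guv u v ↔
      DivProp u v (fCF u v (C (((M : Matrix (Fin 2) (Fin 2) ℤ) 0 1 : ℚ) /
        ((M : Matrix (Fin 2) (Fin 2) ℤ) 1 1 : ℚ)))) := by
  have huv6 : 6 ≤ u * v := by
    by_contra h
    push_neg at h
    have hu3 : u ≤ 2 := by nlinarith
    have hv3 : v ≤ 2 := by nlinarith
    have hu2 : u = 2 := by omega
    have hv2 : v = 2 := by omega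
    rw [hu2, hv2] at huv
    norm_num at huv
  have hu0 : u ≠ 0 := by omega
  have hv0 : v ≠ 0 := by omega
  have hMsub : M ∈ Gsub u v := Gscr_mem_Gsub hM
  set b := (M : Matrix (Fin 2) (Fin 2) ℤ) 0 1 with hbdef
  set d := (M : Matrix (Fin 2) (Fin 2) ℤ) 1 1 with hddef
  have hd1 : u * v ∣ d - 1 := hMsub.2.2.2
  have hd0 : d ≠ 0 := by
    intro h
    rw [h] at hd1
    have h2 : u * v ∣ 1 := by
      have := (dvd_neg (α := ℤ)).mpr hd1
      simpa using this
    have := Int.le_of_dvd one_pos h2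
    omega
  have hd0q : (d : ℚ) ≠ 0 := Int.cast_ne_zero.mpr hd0
  have hdet : (M : Matrix (Fin 2) (Fin 2) ℤ) 0 0 * d -
      b * (M : Matrix (Fin 2) (Fin 2) ℤ) 1 0 = 1 := by
    have h := Matrix.SpecialLinearGroup.det_coe M
    rwa [Matrix.det_fin_two] at h
  have hcop : IsCoprime b d :=
    ⟨-((M : Matrix (Fin 2) (Fin 2) ℤ) 1 0), (M : Matrix (Fin 2) (Fin 2) ℤ) 0 0,
      by linear_combination hdet⟩
  constructor
  · -- forward direction
    intro hMG
    obtain ⟨l, hlM, hlnz⟩ := exists_altProd hMG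
    have hcol : colv M = cp (sc u v true l) := by
      rw [← hlM]; exact colv_altProd u v l
    have hdp : DivProp u v (sc u v true l) := (divProp_sc u v l).1
    have hnzs : IntNZ (sc u v true l) := sc_intNZ u v hu0 hv0 l hlnz
    obtain ⟨s, hscp, hsodd, hsgood⟩ :
        ∃ s : List ℤ, cp s = cp (sc u v true l) ∧ s.length % 2 = 1 ∧ Good u v s := by
      rcases eq_or_ne (sc u v true l) [] with hnil | hne
      · refine ⟨[0], by rw [hnil]; rfl, rfl, ⟨by simp, ?_, ?_⟩⟩
        · intro i hi
          simp only [List.length_cons, List.length_nil] at hi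
          interval_cases i
          · simpa using dvd_zero v
        · intro i hi hl
          simp only [List.length_cons, List.length_nil] at hl
          omega
      · have hpos : 0 < (sc u v true l).length := List.length_pos_iff.mpr hne
        rcases Nat.mod_two_eq_zero_or_one (sc u v true l).length with hpar | hpar
        · refine ⟨(sc u v true l).dropLast, (cp_dropLast _ hpar hne).symm, ?_, ?_, ?_, ?_⟩
          · rw [List.length_dropLast]; omega
          · have : 0 < (sc u v true l).dropLast.length := by
              rw [List.length_dropLast]; omega
            exact List.ne_nil_of_length_pos this
          · intro i hi
            rw [List.length_dropLast] at hi
            rw [getD_dropLast _ _ (by omega)]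
            exact hdp i (by omega)
          · intro i hi0 hi
            rw [List.length_dropLast] at hi
            rw [getD_dropLast _ _ (by omega)]
            exact hnzs i hi0 (by omega)
        · exact ⟨sc u v true l, rfl, hpar, hne, hdp, hnzs⟩
    have hcolM : colv M = (b, d) := rfl
    have hcps : cp s = (b, d) := by rw [hscp, ← hcol, hcolM]
    have hents : Ents2 (s.drop 1) := by
      rcases s with _ | ⟨a, tl⟩
      · exact absurd rfl hsgood.1
      · exact good_ents2_tail hu hv hsgood
    obtain ⟨hD, hBE⟩ := cp_spec s hents hsodd
    have hb' : (cp s).1 = b := by rw [hcps]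
    have hd' : (cp s).2 = d := by rw [hcps]
    have hx : (b : ℚ) / (d : ℚ) = E s := by
      rw [← hb', ← hd', hBE]
      rw [hd'] at hD ⊢
      field_simp
    rw [hx, Qmain C hC s.length u v hu hv huv6 s hsgood le_rfl]
    exact hsgood.2.1
  · -- backward direction
    intro hdiv
    obtain ⟨⟨c, t', hct, _⟩, hEt, htails⟩ :=
      fCF_main (C ((b : ℚ) / (d : ℚ))).length u v (C ((b : ℚ) / (d : ℚ))) le_rfl
        (hC ((b : ℚ) / (d : ℚ))).1
    set t := fCF u v (C ((b : ℚ) / (d : ℚ))) with htdef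
    have htne : t ≠ [] := by rw [hct]; simp
    have hEtx : E t = (b : ℚ) / (d : ℚ) := by
      rw [hEt, (hC _).2]
    have hgood : Good u v t := ⟨htne, hdiv, nz_of_tails t htails⟩
    have hents : Ents2 (t.drop 1) := by
      rw [hct]
      exact good_ents2_tail hu hv (hct ▸ hgood)
    rcases Nat.mod_two_eq_zero_or_one t.length with hpar | hpar
    · -- even length: impossible
      exfalso
      have hw_odd : t'.length % 2 = 1 := by
        rw [hct] at hpar; simp at hpar; omega
      have hw_ne : t' ≠ [] := by
        intro h; rw [h] at hw_odd; simp at hw_odd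
      have hentsw : Ents2 t' := by
        have := hents; rw [hct] at this; simpa using this
      have hdivw : DivProp v u t' := (divProp_cons.mp (hct ▸ hdiv)).2
      have hspec := ep_spec t' hentsw hw_ne
      obtain ⟨hq, hval, hcopt, hqp⟩ := ep_step c t' hspec
      have humod : u ∣ (ep t').1 := ep_mod u v t' hentsw hdivw hw_odd
      have huq : u ∣ (ep (c :: t')).2 := by rw [hqp]; exact humod
      have hvalx : ((ep (c :: t')).1 : ℚ) = (b : ℚ) / (d : ℚ) * (ep (c :: t')).2 := by
        rw [hval, ← hct, hEtx]
      have hpd : ((ep (c :: t')).1 : ℚ) * d = (b : ℚ) * (ep (c :: t')).2 := by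
        rw [hvalx]; field_simp
      have hpdz : (ep (c :: t')).1 * d = b * (ep (c :: t')).2 := by exact_mod_cast hpd
      have hudvd : u ∣ (ep (c :: t')).1 * d := by
        rw [hpdz]; exact Dvd.dvd.mul_left huq b
      have hcup : IsCoprime (ep (c :: t')).1 u :=
        hcopt.of_isCoprime_of_dvd_right huq
      have hud : u ∣ d := (hcup.symm).dvd_of_dvd_mul_left hudvd
      have hud1 : u ∣ d - 1 := dvd_trans (dvd_mul_right u v) hd1
      have hu1 : u ∣ 1 := by
        have := dvd_sub hud hud1
        simpa using this
      have := Int.le_of_dvd one_pos hu1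
      omega
    · -- odd length: construct the witness word
      have hscusc : sc u v true (usc u v true t) = t := (sc_usc u v t).1 hdiv
      have hcolN : colv (altProd u v true (usc u v true t)) = cp t := by
        rw [colv_altProd, hscusc]
      have hNG : altProd u v true (usc u v true t) ∈ Guv u v := altProd_mem u v _ true
      obtain ⟨hD, hBE⟩ := cp_spec t hents hpar
      have hNsub := Guv_le_Gsub u v hNG
      have hN01 : ((altProd u v true (usc u v true t) : SL2) :
          Matrix (Fin 2) (Fin 2) ℤ) 0 1 = (cp t).1 := by
        have := congrArg Prod.fst hcolN
        simpa [colv] using this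
      have hN11 : ((altProd u v true (usc u v true t) : SL2) :
          Matrix (Fin 2) (Fin 2) ℤ) 1 1 = (cp t).2 := by
        have := congrArg Prod.snd hcolN
        simpa [colv] using this
      have hD1 : u * v ∣ (cp t).2 - 1 := by
        have := hNsub.2.2.2
        rwa [hN11] at this
      have hdetN : ((altProd u v true (usc u v true t) : SL2) :
          Matrix (Fin 2) (Fin 2) ℤ) 0 0 * (cp t).2 -
          (cp t).1 * ((altProd u v true (usc u v true t) : SL2) :
          Matrix (Fin 2) (Fin 2) ℤ) 1 0 = 1 := by
        have h := Matrix.SpecialLinearGroup.det_coe (altProd u v true (usc u v true t))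
        rw [Matrix.det_fin_two, hN01, hN11] at h
        exact h
      have hcopN : IsCoprime (cp t).1 (cp t).2 :=
        ⟨-(((altProd u v true (usc u v true t) : SL2) :
          Matrix (Fin 2) (Fin 2) ℤ) 1 0),
          ((altProd u v true (usc u v true t) : SL2) : Matrix (Fin 2) (Fin 2) ℤ) 0 0,
          by linear_combination hdetN⟩
      have hBD : (b : ℚ) * (cp t).2 = ((cp t).1 : ℚ) * d := by
        rw [hBE, hEtx]; field_simp
      have hBDz : b * (cp t).2 = (cp t).1 * d := by exact_mod_cast hBD
      have hdD : d ∣ (cp t).2 := by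
        refine (hcop.symm).dvd_of_dvd_mul_left ?_
        rw [hBDz]
        exact dvd_mul_left d _
      have hDd : (cp t).2 ∣ d := by
        refine (hcopN.symm).dvd_of_dvd_mul_left ?_
        rw [← hBDz]
        exact dvd_mul_left _ b
      obtain ⟨k, hk⟩ := hdD
      obtain ⟨j, hj⟩ := hDd
      have hkj : k * j = 1 := by
        have h1 : d * (k * j) = d * 1 := by
          rw [mul_one, ← mul_assoc, ← hk, ← hj]
        exact mul_left_cancel₀ hd0 h1
      have hDdval : (cp t).2 = d := by
        rcases Int.eq_one_or_neg_one_of_mul_eq_one' hkj with ⟨h1, _⟩ | ⟨h1, _⟩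
        · rw [hk, h1, mul_one]
        · exfalso
          rw [hk, h1] at hD1
          have h3 : u * v ∣ (d - 1) + (d * -1 - 1) := dvd_add hd1 hD1
          have h4 : u * v ∣ 2 := by
            have h5 : (d - 1) + (d * -1 - 1) = -2 := by ring
            rw [h5] at h3
            have := (dvd_neg (α := ℤ)).mpr h3
            simpa using this
          have := Int.le_of_dvd (by norm_num) h4
          omega
      have hBbval : (cp t).1 = b := by
        have h1 : b * d = (cp t).1 * d := by rw [← hBDz, hDdval]
        exact (mul_right_cancel₀ hd0 h1).symm
      exact mem_Guv_of_col huv6 hMsub hNG (by rw [hN01, hBbval]) (by rw [hN11, hDdval])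

/-- Main theorem: for `u, v ≥ 2` with `uv ≠ 4` and `M = [[a,b],[c,d]] ∈ 𝒢_{u,v}`,
`M ∈ G_{u,v}` iff `(f_{u,v} ∘ C)(b/d)` satisfies the `(u,v)`-divisibility property. -/
theorem membership_criterion (u v : ℤ) (hu : 2 ≤ u) (hv : 2 ≤ v) (huv : u * v ≠ 4)
    (C : ℚ → List ℤ) (hC : ∀ x : ℚ, IsShortCF (C x) ∧ E (C x) = x)
    (M : SL2) (hM : M ∈ Gscr u v) :
    M ∈ Guv u v ↔
      DivProp u v (fCF u v (C (((M : Matrix (Fin 2) (Fin 2) ℤ) 0 1 : ℚ) /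
        ((M : Matrix (Fin 2) (Fin 2) ℤ) 1 1 : ℚ)))) := by
  exact membership_criterion' u v hu hv huv C hC M hM
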